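/- arXiv:0808.3247 — 6 statements merged into one kernel-verified Lean document; each statement's English description precedes it below -/
import Mathlib

section
/- Proposition 1 (Fatou property of Bilateral Grand Lebesgue spaces). Let ψ ∈ Ψ(a,b) and let (f_n) be a sequence of measurable functions f_n : X → [0,∞) such that for μ-a.e. x the sequence (f_n(x)) is nondecreasing and converges to f(x), and such that sup_n ‖f_n‖_{G(ψ)} < ∞. Then the sequence (‖f_n‖_{G(ψ)}) is nondecreasing and converges to ‖f‖_{G(ψ)}; in particular ‖f‖_{G(ψ)} = sup_n ‖f_n‖_{G(ψ)} < ∞. -/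
open MeasureTheory ENNReal Set

noncomputable section

/-- The set of exponents p with a < p and p < b (b may be infinite). -/
def expSet (a : ℝ) (b : ℝ≥0∞) : Set ℝ := {p : ℝ | a < p ∧ ENNReal.ofReal p < b}

/-- The class Ψ(a,b). -/
structure IsPsi (a : ℝ) (b : ℝ≥0∞) (ψ : ℝ → ℝ) : Prop where
  one_le : ∀ p ∈ expSet a b, 1 ≤ ψ p
  bddOnCompacts : ∀ c d : ℝ, c ∈ expSet a b → d ∈ expSet a b → BddAbove (ψ '' Set.Icc c d)
  logConvex : ConvexOn ℝ (expSet a b) fun p => Real.log (ψ p)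

/-- L^p norm (real exponent). -/
def lpNorm {X : Type*} [MeasurableSpace X] (μ : Measure X) (f : X → ℝ) (p : ℝ) : ℝ≥0∞ :=
  (∫⁻ x, ENNReal.ofReal (|f x| ^ p) ∂μ) ^ (1 / p)

/-- Bilateral Grand Lebesgue norm. -/
def glNorm {X : Type*} [MeasurableSpace X] (μ : Measure X) (a : ℝ) (b : ℝ≥0∞) (ψ : ℝ → ℝ)
    (f : X → ℝ) : ℝ≥0∞ :=
  ⨆ p ∈ expSet a b, lpNorm μ f p / ENNReal.ofReal (ψ p)

/-- L^p norm for extended-real-valued functions. -/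
def lpNormE {X : Type*} [MeasurableSpace X] (μ : Measure X) (g : X → EReal) (p : ℝ) : ℝ≥0∞ :=
  (∫⁻ x, (g x).abs ^ p ∂μ) ^ (1 / p)

/-- Bilateral Grand Lebesgue norm for extended-real-valued functions. -/
def glNormE {X : Type*} [MeasurableSpace X] (μ : Measure X) (a : ℝ) (b : ℝ≥0∞) (ψ : ℝ → ℝ)
    (g : X → EReal) : ℝ≥0∞ :=
  ⨆ p ∈ expSet a b, lpNormE μ g p / ENNReal.ofReal (ψ p)

/-- L^p norm for `ℝ≥0∞`-valued functions. -/
def lpNormNN {X : Type*} [MeasurableSpace X] (μ : Measure X) (g : X → ℝ≥0∞) (p : ℝ) : ℝ≥0∞ :=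
  (∫⁻ x, g x ^ p ∂μ) ^ (1 / p)

end

/-- Proposition 1 (Fatou property of Bilateral Grand Lebesgue spaces). -/
theorem fatou_property_BGL
    {X : Type*} [MeasurableSpace X] (μ : Measure X) [SigmaFinite μ]
    (a : ℝ) (b : ℝ≥0∞) (ha : 1 ≤ a) (hab : ENNReal.ofReal a < b)
    (ψ : ℝ → ℝ) (hψ : IsPsi a b ψ)
    (f : ℕ → X → ℝ) (g : X → ℝ)
    (hfmeas : ∀ n, Measurable (f n)) (hgmeas : Measurable g)
    (hnonneg : ∀ n x, 0 ≤ f n x)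
    (hmono : ∀ᵐ x ∂μ, Monotone fun n => f n x)
    (hlim : ∀ᵐ x ∂μ, Filter.Tendsto (fun n => f n x) Filter.atTop (nhds (g x)))
    (hbdd : (⨆ n, glNorm μ a b ψ (f n)) < ⊤) :
    (Monotone fun n => glNorm μ a b ψ (f n)) ∧
    Filter.Tendsto (fun n => glNorm μ a b ψ (f n)) Filter.atTop (nhds (glNorm μ a b ψ g)) ∧
    glNorm μ a b ψ g = (⨆ n, glNorm μ a b ψ (f n)) ∧
    glNorm μ a b ψ g < ⊤ := by
  -- positivity of exponents
  have hp_pos : ∀ p ∈ expSet a b, 0 < p := fun p hp =>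
    lt_of_lt_of_le one_pos (le_of_lt (lt_of_le_of_lt ha hp.1))
  -- monotonicity of L^p norms
  have hmono_lp : ∀ p ∈ expSet a b, Monotone fun n => lpNorm μ (f n) p := by
    intro p hp m n hmn
    unfold _root_.lpNorm
    have := hp_pos p hp
    refine ENNReal.rpow_le_rpow ?_ (by positivity)
    refine lintegral_mono_ae ?_
    filter_upwards [hmono] with x hx
    exact ENNReal.ofReal_le_ofReal (Real.rpow_le_rpow (abs_nonneg _)
      (by rw [abs_of_nonneg (hnonneg m x), abs_of_nonneg (hnonneg n x)]; exact hx hmn)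
      (hp_pos p hp).le)
  -- L^p norm of g is the sup of L^p norms of f n
  have hlim_lp : ∀ p ∈ expSet a b, lpNorm μ g p = ⨆ n, lpNorm μ (f n) p := by
    intro p hp
    have hpp := hp_pos p hp
    set F : ℕ → X → ℝ≥0∞ := fun n x => ENNReal.ofReal (|f n x| ^ p) with hF
    have hFmeas : ∀ n, Measurable (F n) := fun n =>
      (ENNReal.continuous_ofReal.comp
        ((Real.continuous_rpow_const hpp.le).comp continuous_abs)).measurable.comp (hfmeas n)
    have hFmono : ∀ᵐ x ∂μ, Monotone fun n => F n x := by
      filter_upwards [hmono] with x hx m n hmn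
      exact ENNReal.ofReal_le_ofReal (Real.rpow_le_rpow (abs_nonneg _)
        (by rw [abs_of_nonneg (hnonneg m x), abs_of_nonneg (hnonneg n x)]; exact hx hmn)
        hpp.le)
    have hae : ∀ᵐ x ∂μ, ENNReal.ofReal (|g x| ^ p) = ⨆ n, F n x := by
      filter_upwards [hmono, hlim] with x hx hlx
      have htend : Filter.Tendsto (fun n => F n x) Filter.atTop
          (nhds (ENNReal.ofReal (|g x| ^ p))) := by
        refine (ENNReal.continuous_ofReal.tendsto _).comp ?_
        exact (hlx.abs).rpow_const (Or.inr hpp.le)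
      have hmon : Monotone fun n => F n x := by
        intro m n hmn
        exact ENNReal.ofReal_le_ofReal (Real.rpow_le_rpow (abs_nonneg _)
          (by rw [abs_of_nonneg (hnonneg m x), abs_of_nonneg (hnonneg n x)]; exact hx hmn)
          hpp.le)
      exact tendsto_nhds_unique htend (tendsto_atTop_iSup hmon)
    unfold _root_.lpNorm
    rw [lintegral_congr_ae hae, lintegral_iSup' (fun n => (hFmeas n).aemeasurable) hFmono]
    -- rpow of sup
    refine Monotone.map_iSup_of_continuousAt (f := fun x : ℝ≥0∞ => x ^ (1/p)) ?_ ?_ ?_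
    · exact ENNReal.continuous_rpow_const.continuousAt
    · intro x y hxy; exact ENNReal.rpow_le_rpow hxy (by positivity)
    · show (⊥ : ℝ≥0∞) ^ (1 / p) = ⊥
      simp only [bot_eq_zero]
      exact ENNReal.zero_rpow_of_pos (one_div_pos.mpr hpp)
  -- the key identity
  have key : glNorm μ a b ψ g = ⨆ n, glNorm μ a b ψ (f n) := by
    unfold glNorm
    rw [iSup_comm]
    refine iSup_congr fun p => ?_
    by_cases hp : p ∈ expSet a b
    · simp only [hp, iSup_pos]
      rw [hlim_lp p hp, ENNReal.iSup_div]
    · simp [hp]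
  have hmono_gl : Monotone fun n => glNorm μ a b ψ (f n) := by
    intro m n hmn
    exact iSup_mono fun p => iSup_mono fun hp =>
      ENNReal.div_le_div_right (hmono_lp p hp hmn) _
  refine ⟨hmono_gl, ?_, key, key ▸ hbdd⟩
  rw [key]
  exact tendsto_atTop_iSup hmono_gl
end

section
/- Proposition 4. Let ψ, ν, ζ ∈ Ψ(a,b) with ζ(p) = ψ(p)·ν(p) for all p ∈ (a,b). Let m ≥ 1 and let f_1, …, f_m : X → ℝ be measurable functions with max_{1≤i≤m} ‖f_i‖_{G(ψ)} < ∞. Then the pointwise maximum g(x) = max_{1≤i≤m} f_i(x) satisfies ‖g‖_{G(ζ)} ≤ (max_{1≤i≤m} ‖f_i‖_{G(ψ)}) · sup_{p∈(a,b)} m^{1/p}/ν(p). -/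
open MeasureTheory ENNReal Set

/-- Proposition 4. -/
theorem pisier_BGL
    {X : Type*} [MeasurableSpace X] (μ : Measure X) [SigmaFinite μ]
    (a : ℝ) (b : ℝ≥0∞) (ha : 1 ≤ a) (hab : ENNReal.ofReal a < b)
    (ψ ν ζ : ℝ → ℝ) (hψ : IsPsi a b ψ) (hν : IsPsi a b ν) (hζ : IsPsi a b ζ)
    (hmul : ∀ p ∈ expSet a b, ζ p = ψ p * ν p)
    (m : ℕ) (hm : 1 ≤ m)
    (f : Fin m → X → ℝ) (hmeas : ∀ i, Measurable (f i))
    (hfin : (⨆ i, glNorm μ a b ψ (f i)) < ⊤) :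
    glNorm μ a b ζ (fun x => ⨆ i, f i x) ≤
      (⨆ i, glNorm μ a b ψ (f i)) *
        ⨆ p ∈ expSet a b, (m : ℝ≥0∞) ^ (1 / p) / ENNReal.ofReal (ν p) := by
  set S := ⨆ i, glNorm μ a b ψ (f i) with hS
  haveI : Nonempty (Fin m) := ⟨⟨0, hm⟩⟩
  rw [glNorm]
  apply iSup₂_le
  intro p hp
  obtain ⟨hap, hpb⟩ := hp
  have hp0 : 0 < p := lt_of_lt_of_le one_pos (le_of_lt (lt_of_le_of_lt ha hap)) |>.trans_le le_rfl
  have hψp : 1 ≤ ψ p := hψ.one_le p ⟨hap, hpb⟩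
  have hνp : 1 ≤ ν p := hν.one_le p ⟨hap, hpb⟩
  have hψ0 : ENNReal.ofReal (ψ p) ≠ 0 := by
    simp [ENNReal.ofReal_eq_zero]; linarith
  have hψt : ENNReal.ofReal (ψ p) ≠ ⊤ := ENNReal.ofReal_ne_top
  -- each f i has L^p norm ≤ S * ψ p
  have hfi : ∀ i, lpNorm μ (f i) p ≤ S * ENNReal.ofReal (ψ p) := by
    intro i
    have h1 : lpNorm μ (f i) p / ENNReal.ofReal (ψ p) ≤ S := by
      refine le_trans ?_ (le_iSup _ i)
      rw [glNorm]
      exact le_iSup₂ (f := fun q (_ : q ∈ expSet a b) =>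
        lpNorm μ (f i) q / ENNReal.ofReal (ψ q)) p ⟨hap, hpb⟩
    exact (ENNReal.div_le_iff_le_mul (Or.inl hψ0) (Or.inl hψt)).mp h1
  -- integral of each |f i|^p
  have hint : ∀ i, (∫⁻ x, ENNReal.ofReal (|f i x| ^ p) ∂μ)
      ≤ (S * ENNReal.ofReal (ψ p)) ^ p := by
    intro i
    have heq : (∫⁻ x, ENNReal.ofReal (|f i x| ^ p) ∂μ) = lpNorm μ (f i) p ^ p := by
      rw [_root_.lpNorm, ← ENNReal.rpow_mul, one_div, inv_mul_cancel₀ hp0.ne', ENNReal.rpow_one]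
    rw [heq]
    exact ENNReal.rpow_le_rpow (hfi i) hp0.le
  -- pointwise bound on the max
  have hpt : ∀ x, ENNReal.ofReal (|⨆ i, f i x| ^ p)
      ≤ ∑ i, ENNReal.ofReal (|f i x| ^ p) := by
    intro x
    obtain ⟨k, hk⟩ := Finite.exists_max (fun i => f i x)
    have hsup : (⨆ i, f i x) = f k x :=
      le_antisymm (ciSup_le hk) (le_ciSup (f := fun i => f i x) (Set.Finite.bddAbove (Set.finite_range _)) k)
    rw [hsup]
    exact Finset.single_le_sum (f := fun i => ENNReal.ofReal (|f i x| ^ p))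
      (fun i _ => zero_le) (Finset.mem_univ k)
  -- integral bound on the max
  have hkey : (∫⁻ x, ENNReal.ofReal (|⨆ i, f i x| ^ p) ∂μ)
      ≤ (m : ℝ≥0∞) * (S * ENNReal.ofReal (ψ p)) ^ p := by
    calc (∫⁻ x, ENNReal.ofReal (|⨆ i, f i x| ^ p) ∂μ)
        ≤ ∫⁻ x, ∑ i, ENNReal.ofReal (|f i x| ^ p) ∂μ := lintegral_mono hpt
      _ = ∑ i, ∫⁻ x, ENNReal.ofReal (|f i x| ^ p) ∂μ := by
          refine lintegral_finset_sum _ fun i _ => ?_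
          exact (((hmeas i).abs.pow_const p).ennreal_ofReal)
      _ ≤ ∑ _i : Fin m, (S * ENNReal.ofReal (ψ p)) ^ p :=
          Finset.sum_le_sum fun i _ => hint i
      _ = (m : ℝ≥0∞) * (S * ENNReal.ofReal (ψ p)) ^ p := by
          simp [Finset.sum_const, mul_comm]
  -- L^p bound on the max
  have hg : lpNorm μ (fun x => ⨆ i, f i x) p
      ≤ (m : ℝ≥0∞) ^ (1 / p) * (S * ENNReal.ofReal (ψ p)) := by
    rw [_root_.lpNorm]
    calc (∫⁻ x, ENNReal.ofReal (|⨆ i, f i x| ^ p) ∂μ) ^ (1 / p)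
        ≤ ((m : ℝ≥0∞) * (S * ENNReal.ofReal (ψ p)) ^ p) ^ (1 / p) :=
          ENNReal.rpow_le_rpow hkey (by positivity)
      _ = (m : ℝ≥0∞) ^ (1 / p) * (S * ENNReal.ofReal (ψ p)) := by
          rw [ENNReal.mul_rpow_of_nonneg _ _ (by positivity), ← ENNReal.rpow_mul,
            mul_one_div, div_self hp0.ne', ENNReal.rpow_one]
  -- conclude for this p
  have hζp : ENNReal.ofReal (ζ p) = ENNReal.ofReal (ψ p) * ENNReal.ofReal (ν p) := by
    rw [hmul p ⟨hap, hpb⟩, ENNReal.ofReal_mul (by linarith)]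
  calc lpNorm μ (fun x => ⨆ i, f i x) p / ENNReal.ofReal (ζ p)
      ≤ ((m : ℝ≥0∞) ^ (1 / p) * (S * ENNReal.ofReal (ψ p))) /
          (ENNReal.ofReal (ψ p) * ENNReal.ofReal (ν p)) := by
        rw [hζp]; exact ENNReal.div_le_div_right hg _
    _ = S * ((m : ℝ≥0∞) ^ (1 / p) / ENNReal.ofReal (ν p)) := by
        rw [show (m : ℝ≥0∞) ^ (1 / p) * (S * ENNReal.ofReal (ψ p))
            = ENNReal.ofReal (ψ p) * (S * (m : ℝ≥0∞) ^ (1 / p)) by ring]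
        rw [ENNReal.mul_div_mul_left _ _ hψ0 hψt, mul_div_assoc]
    _ ≤ S * ⨆ q ∈ expSet a b, (m : ℝ≥0∞) ^ (1 / q) / ENNReal.ofReal (ν q) := by
        refine mul_le_mul_right ?_ S
        exact le_iSup₂ (f := fun q (_ : q ∈ expSet a b) =>
          (m : ℝ≥0∞) ^ (1 / q) / ENNReal.ofReal (ν q)) p ⟨hap, hpb⟩
end

section
/- Proposition 2 (generic chaining bound). Let ψ ∈ Ψ(a,b). Let T be a countable set written as a union T = ⋃_{k≥0} Q_k of finite subsets with Q_0 = {t_0}. Let π_k : T → Q_k for k ≥ 0 be maps such that π_0(t) = t_0 for all t ∈ T and such that for every t ∈ T there exists K(t) with π_k(t) = t for all k ≥ K(t). Let Y assign to each t ∈ T a measurable function Y(t) : X → ℝ. Then, writing sup_{t∈T} Y(t) for the pointwise supremum (a measurable function with values in (−∞,∞]), one has ‖sup_{t∈T} Y(t)‖_{G(ψ)} ≤ ‖Y(t_0)‖_{G(ψ)} + Σ_{k=1}^∞ ‖ max_{t∈T} |Y(π_k(t)) − Y(π_{k−1}(t))| ‖_{G(ψ)} (the inner maximum at each level k is over the finitely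 many values taken by the pair (π_k(t), π_{k−1}(t))). -/
open MeasureTheory ENNReal Set

section Aux

open Finset

variable {X : Type*} [MeasurableSpace X] (μ : MeasureTheory.Measure X)

private lemma lpNormNN_finsum_le (F : ℕ → X → ℝ≥0∞) (hF : ∀ k, Measurable (F k)) {p : ℝ}
    (hp : 1 ≤ p) (n : ℕ) :
    lpNormNN μ (fun x => ∑ k ∈ Finset.range n, F k x) p ≤
      ∑ k ∈ Finset.range n, lpNormNN μ (F k) p := by
  have hp0 : (0:ℝ) < p := one_pos.trans_le hp
  induction n with
  | zero =>
      simp only [Finset.range_zero, Finset.sum_empty, lpNormNN]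
      simp [ENNReal.zero_rpow_of_pos hp0, lintegral_zero,
        ENNReal.zero_rpow_of_pos (by positivity : (0:ℝ) < 1/p), hp0]
  | succ n ih =>
      have h1 : (fun x => ∑ k ∈ Finset.range (n+1), F k x) =
          fun x => (∑ k ∈ Finset.range n, F k x) + F n x := by
        funext x; rw [Finset.sum_range_succ]
      rw [h1, Finset.sum_range_succ]
      refine le_trans ?_ (add_le_add_left ih _)
      exact ENNReal.lintegral_Lp_add_le
        (Finset.measurable_sum _ (fun k _ => hF k)).aemeasurable (hF n).aemeasurable hp

private lemma lpNormNN_tsum_le (F : ℕ → X → ℝ≥0∞) (hF : ∀ k, Measurable (F k)) {p : ℝ}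
    (hp : 1 ≤ p) :
    lpNormNN μ (fun x => ∑' k, F k x) p ≤ ∑' k, lpNormNN μ (F k) p := by
  have hp0 : (0:ℝ) < p := one_pos.trans_le hp
  have hp0' : (0:ℝ) < 1/p := by positivity
  set S : ℕ → X → ℝ≥0∞ := fun n x => ∑ k ∈ Finset.range n, F k x with hS
  have hSmeas : ∀ n, Measurable (S n) := fun n => Finset.measurable_sum _ fun k _ => hF k
  have key : (fun x => ∑' k, F k x) = fun x => ⨆ n, S n x := by
    funext x; exact ENNReal.tsum_eq_iSup_nat
  rw [key]
  show (∫⁻ x, (⨆ n, S n x) ^ p ∂μ) ^ (1/p) ≤ _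
  have h1 : ∀ x, (⨆ n, S n x) ^ p = ⨆ n, S n x ^ p := by
    intro x
    have h := (ENNReal.orderIsoRpow p hp0).map_iSup (fun n => S n x)
    simp only [ENNReal.orderIsoRpow_apply] at h
    exact h
  have h2 : ∫⁻ x, (⨆ n, S n x) ^ p ∂μ = ⨆ n, ∫⁻ x, S n x ^ p ∂μ := by
    rw [lintegral_congr h1]
    exact lintegral_iSup (fun n => (hSmeas n).pow_const p)
      (fun m n hmn x => ENNReal.rpow_le_rpow
        (Finset.sum_le_sum_of_subset (Finset.range_subset_range.2 hmn)) hp0.le)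
  rw [h2]
  have h3 : (⨆ n, ∫⁻ x, S n x ^ p ∂μ) ^ (1/p) = ⨆ n, (∫⁻ x, S n x ^ p ∂μ) ^ (1/p) := by
    have h := (ENNReal.orderIsoRpow (1/p) hp0').map_iSup (fun n => ∫⁻ x, S n x ^ p ∂μ)
    simp only [ENNReal.orderIsoRpow_apply] at h
    exact h
  rw [h3]
  exact iSup_le fun n => (lpNormNN_finsum_le μ F hF hp n).trans (ENNReal.sum_le_tsum _)

private lemma abs_iSup_le {ι : Type*} [Nonempty ι] (f : ι → ℝ) :
    (⨆ i, (f i : EReal)).abs ≤ ⨆ i, ENNReal.ofReal |f i| := by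
  rw [le_iSup_iff]
  intro c hc
  rcases eq_or_ne c ⊤ with rfl | hc'
  · exact le_top
  have hM0 : (0:ℝ) ≤ c.toReal := ENNReal.toReal_nonneg
  have habs : ∀ i, |f i| ≤ c.toReal := fun i => by
    have h := hc i
    rwa [← ENNReal.ofReal_toReal hc', ENNReal.ofReal_le_ofReal_iff hM0] at h
  set s := ⨆ i, (f i : EReal) with hs
  obtain ⟨i₀⟩ := ‹Nonempty ι›
  have hub : s ≤ ((c.toReal : ℝ) : EReal) :=
    iSup_le fun i => EReal.coe_le_coe_iff.2 ((le_abs_self _).trans (habs i))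
  have hlb : ((f i₀ : ℝ) : EReal) ≤ s := le_iSup (fun i => ((f i : ℝ) : EReal)) i₀
  have hst : s ≠ ⊤ := ne_top_of_le_ne_top (EReal.coe_ne_top _) hub
  have hsb : s ≠ ⊥ := fun h => by simp [h] at hlb
  lift s to ℝ using ⟨hst, hsb⟩ with r hr
  rw [EReal.abs_def, ← ENNReal.ofReal_toReal hc']
  refine ENNReal.ofReal_le_ofReal (abs_le.2 ⟨?_, EReal.coe_le_coe_iff.1 hub⟩)
  have : -c.toReal ≤ f i₀ := (abs_le.1 (habs i₀)).1
  exact this.trans (EReal.coe_le_coe_iff.1 hlb)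

end Aux

/-- Proposition 2 (generic chaining bound). -/
theorem generic_chaining_bound
    {X : Type*} [MeasurableSpace X] (μ : Measure X) [SigmaFinite μ]
    (a : ℝ) (b : ℝ≥0∞) (ha : 1 ≤ a) (hab : ENNReal.ofReal a < b)
    (ψ : ℝ → ℝ) (hψ : IsPsi a b ψ)
    (T : Type*) [Countable T]
    (Y : T → X → ℝ) (hYmeas : ∀ t, Measurable (Y t))
    (Q : ℕ → Finset T) (t₀ : T) (hQ0 : Q 0 = {t₀})
    (hcover : ∀ t, ∃ k, t ∈ Q k)
    (π : ℕ → T → T) (hπmem : ∀ k t, π k t ∈ Q k) (hπ0 : ∀ t, π 0 t = t₀)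
    (hπev : ∀ t, ∃ K, ∀ k, K ≤ k → π k t = t) :
    glNormE μ a b ψ (fun x => ⨆ t, (Y t x : EReal)) ≤
      glNorm μ a b ψ (Y t₀) +
        ∑' k : ℕ, glNorm μ a b ψ (fun x => ⨆ t, |Y (π (k + 1) t) x - Y (π k t) x|) := by
  classical
  have hT : Nonempty T := ⟨t₀⟩
  -- the ENNReal-valued level-k increments
  set E : ℕ → X → ℝ≥0∞ :=
    fun k x => ⨆ t, ENNReal.ofReal |Y (π (k + 1) t) x - Y (π k t) x| with hE
  have hEmeas : ∀ k, Measurable (E k) := fun k =>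
    Measurable.iSup fun t =>
      ENNReal.measurable_ofReal.comp (((hYmeas _).sub (hYmeas _)).abs)
  have hbdd : ∀ k x, BddAbove (Set.range fun t => |Y (π (k + 1) t) x - Y (π k t) x|) := by
    intro k x
    apply Set.Finite.bddAbove
    apply Set.Finite.subset
      (Set.Finite.image (fun uv : T × T => |Y uv.1 x - Y uv.2 x|)
        ((Q (k + 1)).finite_toSet.prod (Q k).finite_toSet))
    rintro _ ⟨t, rfl⟩
    exact ⟨(π (k + 1) t, π k t), ⟨hπmem _ t, hπmem _ t⟩, rfl⟩
  have hDnonneg : ∀ k x, 0 ≤ (⨆ t, |Y (π (k + 1) t) x - Y (π k t) x|) := fun k x =>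
    (abs_nonneg _).trans (le_ciSup (hbdd k x) t₀)
  have hENN : ∀ k x, E k x ≤
      ENNReal.ofReal (⨆ t, |Y (π (k + 1) t) x - Y (π k t) x|) := fun k x =>
    iSup_le fun t => ENNReal.ofReal_le_ofReal (le_ciSup (hbdd k x) t)
  -- pointwise chaining bound
  have hptwise : ∀ x, (⨆ t, (Y t x : EReal)).abs ≤
      ENNReal.ofReal |Y t₀ x| + ∑' k, E k x := by
    intro x
    refine (abs_iSup_le _).trans (iSup_le fun t => ?_)
    obtain ⟨K, hK⟩ := hπev t
    have htel : Y t x = Y t₀ x + ∑ k ∈ Finset.range K, (Y (π (k + 1) t) x - Y (π k t) x) := by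
      rw [Finset.sum_range_sub (f := fun k => Y (π k t) x), hπ0 t, hK K le_rfl]
      ring
    have habs : |Y t x| ≤ |Y t₀ x| +
        ∑ k ∈ Finset.range K, |Y (π (k + 1) t) x - Y (π k t) x| := by
      rw [htel]
      exact (abs_add_le _ _).trans (by gcongr; exact Finset.abs_sum_le_sum_abs _ _)
    calc ENNReal.ofReal |Y t x|
        ≤ ENNReal.ofReal (|Y t₀ x| +
            ∑ k ∈ Finset.range K, |Y (π (k + 1) t) x - Y (π k t) x|) :=
          ENNReal.ofReal_le_ofReal habs
      _ = ENNReal.ofReal |Y t₀ x| +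
            ∑ k ∈ Finset.range K, ENNReal.ofReal |Y (π (k + 1) t) x - Y (π k t) x| := by
          rw [ENNReal.ofReal_add (abs_nonneg _) (Finset.sum_nonneg fun k _ => abs_nonneg _),
            ENNReal.ofReal_sum_of_nonneg fun k _ => abs_nonneg _]
      _ ≤ ENNReal.ofReal |Y t₀ x| + ∑' k, E k x := by
          refine add_le_add_right ?_ _
          refine le_trans (Finset.sum_le_sum fun k _ => ?_) (ENNReal.sum_le_tsum _)
          exact le_iSup (fun t => ENNReal.ofReal |Y (π (k + 1) t) x - Y (π k t) x|) t
  -- the per-exponent bound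
  have hmain : ∀ p ∈ expSet a b,
      lpNormE μ (fun x => ⨆ t, (Y t x : EReal)) p ≤
        lpNorm μ (Y t₀) p +
          ∑' k, lpNorm μ (fun x => ⨆ t, |Y (π (k + 1) t) x - Y (π k t) x|) p := by
    intro p hp
    have hp1 : (1:ℝ) ≤ p := ha.trans hp.1.le
    have hp0 : (0:ℝ) < p := one_pos.trans_le hp1
    set F : ℕ → X → ℝ≥0∞ :=
      fun k => Nat.casesOn k (fun x => ENNReal.ofReal |Y t₀ x|) E with hF
    have hFmeas : ∀ k, Measurable (F k) := by
      rintro (_ | k)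
      · exact ENNReal.measurable_ofReal.comp (hYmeas t₀).abs
      · exact hEmeas k
    have hFsum : ∀ x, ∑' k, F k x = ENNReal.ofReal |Y t₀ x| + ∑' k, E k x := fun x =>
      tsum_eq_zero_add' ENNReal.summable
    have step1 : lpNormE μ (fun x => ⨆ t, (Y t x : EReal)) p ≤
        lpNormNN μ (fun x => ∑' k, F k x) p := by
      refine ENNReal.rpow_le_rpow (lintegral_mono fun x => ?_) (by positivity)
      dsimp only
      rw [hFsum x]
      exact ENNReal.rpow_le_rpow (hptwise x) hp0.le
    have step2 := lpNormNN_tsum_le μ F hFmeas hp1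
    have hsplit : ∑' k, lpNormNN μ (F k) p =
        lpNormNN μ (F 0) p + ∑' k, lpNormNN μ (E k) p :=
      tsum_eq_zero_add' ENNReal.summable
    have hF0 : lpNormNN μ (F 0) p = lpNorm μ (Y t₀) p := by
      unfold lpNormNN _root_.lpNorm
      congr 1
      refine lintegral_congr fun x => ?_
      exact ENNReal.ofReal_rpow_of_nonneg (abs_nonneg _) hp0.le
    have hFk : ∀ k, lpNormNN μ (E k) p ≤
        lpNorm μ (fun x => ⨆ t, |Y (π (k + 1) t) x - Y (π k t) x|) p := by
      intro k
      refine ENNReal.rpow_le_rpow (lintegral_mono fun x => ?_) (by positivity)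
      rw [abs_of_nonneg (hDnonneg k x),
        ← ENNReal.ofReal_rpow_of_nonneg (hDnonneg k x) hp0.le]
      exact ENNReal.rpow_le_rpow (hENN k x) hp0.le
    calc lpNormE μ (fun x => ⨆ t, (Y t x : EReal)) p
        ≤ ∑' k, lpNormNN μ (F k) p := step1.trans step2
      _ = lpNorm μ (Y t₀) p + ∑' k, lpNormNN μ (E k) p := by rw [hsplit, hF0]
      _ ≤ _ := add_le_add_right (ENNReal.tsum_le_tsum fun k => hFk k) _
  -- assemble
  simp only [glNormE, glNorm]
  refine iSup₂_le fun p hp => ?_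
  calc lpNormE μ (fun x => ⨆ t, (Y t x : EReal)) p / ENNReal.ofReal (ψ p)
      ≤ (lpNorm μ (Y t₀) p +
          ∑' k, lpNorm μ (fun x => ⨆ t, |Y (π (k + 1) t) x - Y (π k t) x|) p) /
            ENNReal.ofReal (ψ p) := ENNReal.div_le_div_right (hmain p hp) _
    _ = lpNorm μ (Y t₀) p / ENNReal.ofReal (ψ p) +
          ∑' k, lpNorm μ (fun x => ⨆ t, |Y (π (k + 1) t) x - Y (π k t) x|) p /
            ENNReal.ofReal (ψ p) := by
        rw [ENNReal.add_div]
        congr 1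
        simp only [div_eq_mul_inv]
        exact (ENNReal.tsum_mul_right).symm
    _ ≤ _ := by
        refine add_le_add ?_ (ENNReal.tsum_le_tsum fun k => ?_)
        · exact le_iSup₂ (f := fun p (_ : p ∈ expSet a b) =>
            lpNorm μ (Y t₀) p / ENNReal.ofReal (ψ p)) p hp
        · exact le_iSup₂ (f := fun p (_ : p ∈ expSet a b) =>
            lpNorm μ (fun x => ⨆ t, |Y (π (k + 1) t) x - Y (π k t) x|) p /
              ENNReal.ofReal (ψ p)) p hp
end

section
/- Proposition 5 (entropy bound in L^p). Let p ∈ [1,∞), θ ∈ (0,1), let T be a countable set, and let Y(t) ∈ L^p(μ) for each t ∈ T; write d_p(t,s) = ‖Y(t) − Y(s)‖_{L^p(μ)}. Suppose (F_k)_{k≥0} is a nondecreasing sequence of finite subsets of T with ⋃_k F_k = T, F_0 = {t_0}, card(F_k) = N_k, and such that for every k ≥ 0 the set F_k is a θ^k-net of (T, d_p). Then ‖sup_{t∈T} Y(t)‖_{L^p(μ)} ≤ ‖Y(t_0)‖_{L^p(μ)} + Σ_{k=1}^∞ θ^{k−1} N_k^{1/p}, where sup_{t∈T} Y(t) denotes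 the pointwise supremum. -/
open MeasureTheory ENNReal Set

lemma ofReal_finsum_le (m : ℕ) (a : ℕ → ℝ) :
    ENNReal.ofReal (∑ i ∈ Finset.range m, a i) ≤ ∑ i ∈ Finset.range m, ENNReal.ofReal (a i) := by
  induction m with
  | zero => simp
  | succ n ih =>
      rw [Finset.sum_range_succ, Finset.sum_range_succ]
      exact le_trans ENNReal.ofReal_add_le (add_le_add ih le_rfl)

lemma ennreal_rpow_iSup {ι : Sort*} [Nonempty ι] (f : ι → ℝ≥0∞) {c : ℝ} (hc : 0 ≤ c) :
    (⨆ i, f i) ^ c = ⨆ i, (f i) ^ c :=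
  Monotone.map_ciSup_of_continuousAt (ENNReal.continuous_rpow_const.continuousAt)
    (ENNReal.monotone_rpow_of_nonneg hc) (OrderTop.bddAbove _)

lemma ennreal_rpow_one_div_rpow {c : ℝ} (hc : c ≠ 0) (x : ℝ≥0∞) : (x ^ (1/c)) ^ c = x := by
  rw [← ENNReal.rpow_mul, one_div, inv_mul_cancel₀ hc, ENNReal.rpow_one]

/-- Proposition 5 (entropy bound in `L^p`). -/
theorem entropy_bound_lp
    {X : Type*} [MeasurableSpace X] (μ : Measure X) [SigmaFinite μ]
    (p : ℝ) (hp : 1 ≤ p) (θ : ℝ) (hθ0 : 0 < θ) (hθ1 : θ < 1)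
    (T : Type*) [Countable T]
    (Y : T → X → ℝ) (hYmeas : ∀ t, Measurable (Y t))
    (hLp : ∀ t, lpNorm μ (Y t) p < ⊤)
    (F : ℕ → Finset T) (hFmono : Monotone F)
    (hcover : ∀ t, ∃ k, t ∈ F k)
    (t₀ : T) (hF0 : F 0 = {t₀})
    (hnet : ∀ k : ℕ, ∀ t : T, ∃ s ∈ F k,
      lpNorm μ (fun x => Y t x - Y s x) p ≤ ENNReal.ofReal (θ ^ k)) :
    lpNormE μ (fun x => ⨆ t, (Y t x : EReal)) p ≤
      lpNorm μ (Y t₀) p +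
        ∑' k : ℕ, ENNReal.ofReal (θ ^ k) * ((F (k + 1)).card : ℝ≥0∞) ^ (1 / p) := by
  have hp0 : (0:ℝ) < p := lt_of_lt_of_le one_pos hp
  have hp0' : (0:ℝ) ≤ 1 / p := by positivity
  choose π hπmem hπ using fun k t => hnet k t
  set G : ℕ → X → ℝ≥0∞ :=
    fun j x => ⨆ s ∈ F (j+1), ENNReal.ofReal |Y s x - Y (π j s) x| with hGdef
  -- chain bound
  have key : ∀ t x, ENNReal.ofReal (Y t x - Y t₀ x) ≤ ∑' j, G j x := by
    intro t x
    obtain ⟨m, hm⟩ := hcover t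
    set e : ℕ → T := fun i => Nat.rec t (fun i s => π (m - (i+1)) s) i with he
    have heS : ∀ i, e (i+1) = π (m - (i+1)) (e i) := fun i => rfl
    have hemem : ∀ i, e i ∈ F (m - i) := by
      intro i
      induction i with
      | zero => exact hm
      | succ n _ => rw [heS]; exact hπmem _ _
    have hem : e m = t₀ := by
      have h1 := hemem m
      rw [Nat.sub_self, hF0] at h1
      simpa using h1
    have tel : Y t x - Y t₀ x = ∑ i ∈ Finset.range m, (Y (e i) x - Y (e (i+1)) x) := by
      rw [Finset.sum_range_sub' (fun i => Y (e i) x) m, hem]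
      rfl
    calc ENNReal.ofReal (Y t x - Y t₀ x)
        = ENNReal.ofReal (∑ i ∈ Finset.range m, (Y (e i) x - Y (e (i+1)) x)) := by rw [tel]
      _ ≤ ∑ i ∈ Finset.range m, ENNReal.ofReal (Y (e i) x - Y (e (i+1)) x) :=
          ofReal_finsum_le m _
      _ ≤ ∑ i ∈ Finset.range m, G (m - (i+1)) x := by
          refine Finset.sum_le_sum fun i hi => ?_
          have hi' : i < m := Finset.mem_range.mp hi
          have hmem : e i ∈ F ((m - (i+1)) + 1) := by
            have : (m - (i+1)) + 1 = m - i := by omega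
            rw [this]; exact hemem i
          calc ENNReal.ofReal (Y (e i) x - Y (e (i+1)) x)
              ≤ ENNReal.ofReal |Y (e i) x - Y (π (m - (i+1)) (e i)) x| := by
                rw [← heS i]
                exact ENNReal.ofReal_le_ofReal (le_abs_self _)
            _ ≤ G (m - (i+1)) x := by
                have := le_iSup₂ (f := fun (s : T) (_ : s ∈ F ((m - (i+1)) + 1)) =>
                  ENNReal.ofReal |Y s x - Y (π (m - (i+1)) s) x|) (e i) hmem
                exact this
      _ = ∑ i ∈ Finset.range m, G i x := by
          calc ∑ i ∈ Finset.range m, G (m - (i+1)) x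
              = ∑ i ∈ Finset.range m, G (m - 1 - i) x :=
                Finset.sum_congr rfl fun i _ => by
                  rw [show m - (i+1) = m - 1 - i from by omega]
            _ = ∑ i ∈ Finset.range m, G i x := Finset.sum_range_reflect (fun j => G j x) m
      _ ≤ ∑' j, G j x := ENNReal.sum_le_tsum _
  -- pointwise abs bound
  have habs : ∀ x, (⨆ t, (Y t x : EReal)).abs ≤ ENNReal.ofReal |Y t₀ x| + ∑' j, G j x := by
    intro x
    set M := ∑' j, G j x with hM
    by_cases hMtop : M = ⊤
    · rw [hMtop]; simp
    have hub : ∀ t, (Y t x : EReal) ≤ ((Y t₀ x + M.toReal : ℝ) : EReal) := by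
      intro t
      rw [EReal.coe_le_coe_iff]
      have h1 := key t x
      by_cases h : Y t x - Y t₀ x ≤ 0
      · have := ENNReal.toReal_nonneg (a := M); linarith
      · have := (ENNReal.ofReal_le_iff_le_toReal hMtop).mp h1
        linarith
    set S := ⨆ t, (Y t x : EReal) with hS
    have hS_ub : S ≤ ((Y t₀ x + M.toReal : ℝ) : EReal) := iSup_le hub
    have hS_lb : ((Y t₀ x : ℝ) : EReal) ≤ S := le_iSup (fun t => (Y t x : EReal)) t₀
    have hne_top : S ≠ ⊤ := (lt_of_le_of_lt hS_ub (EReal.coe_lt_top _)).ne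
    have hne_bot : S ≠ ⊥ := (lt_of_lt_of_le (EReal.bot_lt_coe _) hS_lb).ne'
    have hr : ((S.toReal : ℝ) : EReal) = S := EReal.coe_toReal hne_top hne_bot
    have hub' : S.toReal ≤ Y t₀ x + M.toReal := by
      rw [← EReal.coe_le_coe_iff]; rw [hr]; exact hS_ub
    have hlb' : Y t₀ x ≤ S.toReal := by
      rw [← EReal.coe_le_coe_iff]; rw [hr]; exact hS_lb
    have habs' : |S.toReal| ≤ |Y t₀ x| + M.toReal := by
      have h1 := neg_abs_le (Y t₀ x)
      have h2 := le_abs_self (Y t₀ x)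
      have h3 := ENNReal.toReal_nonneg (a := M)
      rw [abs_le]; constructor <;> linarith
    calc S.abs = ENNReal.ofReal |S.toReal| := by
          rw [← hr, EReal.abs_def, EReal.toReal_coe]
      _ ≤ ENNReal.ofReal (|Y t₀ x| + M.toReal) := ENNReal.ofReal_le_ofReal habs'
      _ ≤ ENNReal.ofReal |Y t₀ x| + ENNReal.ofReal M.toReal := ENNReal.ofReal_add_le
      _ = ENNReal.ofReal |Y t₀ x| + M := by rw [ENNReal.ofReal_toReal hMtop]
  -- measurability
  have hGmeas : ∀ j, Measurable (G j) := by
    intro j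
    refine Measurable.iSup fun s => Measurable.iSup fun _ => ?_
    exact (((hYmeas s).sub (hYmeas (π j s))).abs).ennreal_ofReal
  set H : X → ℝ≥0∞ := fun x => ENNReal.ofReal |Y t₀ x| + ∑' j, G j x with hHdef
  have hGt : Measurable fun x => ∑' j, G j x := Measurable.ennreal_tsum hGmeas
  have h0meas : Measurable fun x => ENNReal.ofReal |Y t₀ x| := ((hYmeas t₀).abs).ennreal_ofReal
  have hSmeas : ∀ n, Measurable fun x => ∑ j ∈ Finset.range n, G j x := fun n =>
    Finset.measurable_sum _ fun j _ => hGmeas j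
  have step1 : lpNormE μ (fun x => ⨆ t, (Y t x : EReal)) p ≤ lpNormNN μ H p := by
    unfold lpNormE lpNormNN
    refine ENNReal.rpow_le_rpow (lintegral_mono fun x => ?_) hp0'
    exact ENNReal.rpow_le_rpow (habs x) hp0.le
  have step2 : lpNormNN μ H p ≤ lpNormNN μ (fun x => ENNReal.ofReal |Y t₀ x|) p
      + lpNormNN μ (fun x => ∑' j, G j x) p := by
    unfold lpNormNN
    exact ENNReal.lintegral_Lp_add_le h0meas.aemeasurable hGt.aemeasurable hp
  have eq0 : lpNormNN μ (fun x => ENNReal.ofReal |Y t₀ x|) p = lpNorm μ (Y t₀) p := by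
    unfold lpNormNN _root_.lpNorm
    congr 1
    refine lintegral_congr fun x => ?_
    rw [ENNReal.ofReal_rpow_of_nonneg (abs_nonneg _) hp0.le]
  have fin_mink : ∀ n, lpNormNN μ (fun x => ∑ j ∈ Finset.range n, G j x) p
      ≤ ∑ j ∈ Finset.range n, lpNormNN μ (G j) p := by
    intro n
    induction n with
    | zero =>
        unfold lpNormNN
        simp [ENNReal.zero_rpow_of_pos hp0,
          ENNReal.zero_rpow_of_pos (show (0:ℝ) < 1/p by positivity)]
        exact hp0
    | succ n ih =>
        have hfn : (fun x => ∑ j ∈ Finset.range (n+1), G j x)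
            = fun x => (∑ j ∈ Finset.range n, G j x) + G n x := by
          funext x; rw [Finset.sum_range_succ]
        rw [hfn, Finset.sum_range_succ]
        unfold lpNormNN at ih ⊢
        exact le_trans (ENNReal.lintegral_Lp_add_le (hSmeas n).aemeasurable
          (hGmeas n).aemeasurable hp) (add_le_add ih le_rfl)
  have mink : lpNormNN μ (fun x => ∑' j, G j x) p ≤ ∑' j, lpNormNN μ (G j) p := by
    unfold lpNormNN at fin_mink ⊢
    calc (∫⁻ x, (∑' j, G j x) ^ p ∂μ) ^ (1/p)
        = (∫⁻ x, ⨆ n, (∑ j ∈ Finset.range n, G j x) ^ p ∂μ) ^ (1/p) := by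
          congr 1
          refine lintegral_congr fun x => ?_
          rw [ENNReal.tsum_eq_iSup_nat, ennreal_rpow_iSup _ hp0.le]
      _ = (⨆ n, ∫⁻ x, (∑ j ∈ Finset.range n, G j x) ^ p ∂μ) ^ (1/p) := by
          congr 1
          refine lintegral_iSup (fun n => (ENNReal.continuous_rpow_const.measurable).comp
            (hSmeas n)) (fun a b hab x => ?_)
          exact ENNReal.rpow_le_rpow
            (Finset.sum_le_sum_of_subset (Finset.range_subset_range.mpr hab)) hp0.le
      _ = ⨆ n, (∫⁻ x, (∑ j ∈ Finset.range n, G j x) ^ p ∂μ) ^ (1/p) :=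
          ennreal_rpow_iSup _ hp0'
      _ ≤ ∑' j, (∫⁻ x, G j x ^ p ∂μ) ^ (1/p) := by
          refine iSup_le fun n => le_trans (fin_mink n) (ENNReal.sum_le_tsum _)
  have hne : ∀ j : ℕ, (F (j+1)).Nonempty := fun j =>
    ⟨t₀, hFmono (Nat.zero_le _) (by rw [hF0]; exact Finset.mem_singleton_self t₀)⟩
  have hGbound : ∀ j, lpNormNN μ (G j) p ≤
      ENNReal.ofReal (θ ^ j) * ((F (j+1)).card : ℝ≥0∞) ^ (1/p) := by
    intro j
    have hpt : ∀ x, G j x ^ p ≤ ∑ s ∈ F (j+1), ENNReal.ofReal (|Y s x - Y (π j s) x| ^ p) := by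
      intro x
      obtain ⟨s₀, hs₀, hsup⟩ := Finset.exists_mem_eq_sup (F (j+1)) (hne j)
        (fun s => ENNReal.ofReal |Y s x - Y (π j s) x|)
      have hGx : G j x = (F (j+1)).sup (fun s => ENNReal.ofReal |Y s x - Y (π j s) x|) :=
        (Finset.sup_eq_iSup _ _).symm
      rw [hGx, hsup, ENNReal.ofReal_rpow_of_nonneg (abs_nonneg _) hp0.le]
      exact Finset.single_le_sum
        (f := fun s => ENNReal.ofReal (|Y s x - Y (π j s) x| ^ p)) (fun s _ => zero_le) hs₀
    calc lpNormNN μ (G j) p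
        ≤ (∫⁻ x, ∑ s ∈ F (j+1), ENNReal.ofReal (|Y s x - Y (π j s) x| ^ p) ∂μ) ^ (1/p) := by
          unfold lpNormNN
          exact ENNReal.rpow_le_rpow (lintegral_mono hpt) hp0'
      _ = (∑ s ∈ F (j+1), ∫⁻ x, ENNReal.ofReal (|Y s x - Y (π j s) x| ^ p) ∂μ) ^ (1/p) := by
          congr 1
          exact lintegral_finset_sum _ fun s _ =>
            ((Real.continuous_rpow_const hp0.le).measurable.comp
              ((hYmeas s).sub (hYmeas (π j s))).abs).ennreal_ofReal
      _ ≤ (∑ _s ∈ F (j+1), (ENNReal.ofReal (θ ^ j)) ^ p) ^ (1/p) := by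
          refine ENNReal.rpow_le_rpow (Finset.sum_le_sum fun s _ => ?_) hp0'
          have h1 : (lpNorm μ (fun x => Y s x - Y (π j s) x) p) ^ p
              = ∫⁻ x, ENNReal.ofReal (|Y s x - Y (π j s) x| ^ p) ∂μ := by
            unfold _root_.lpNorm
            exact ennreal_rpow_one_div_rpow hp0.ne' _
          rw [← h1]
          exact ENNReal.rpow_le_rpow (hπ j s) hp0.le
      _ = ENNReal.ofReal (θ ^ j) * ((F (j+1)).card : ℝ≥0∞) ^ (1/p) := by
          rw [Finset.sum_const, nsmul_eq_mul,
            ENNReal.mul_rpow_of_nonneg _ _ hp0',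
            ← ENNReal.rpow_mul, mul_one_div, div_self hp0.ne', ENNReal.rpow_one,
            mul_comm]
  calc lpNormE μ (fun x => ⨆ t, (Y t x : EReal)) p
      ≤ lpNormNN μ H p := step1
    _ ≤ lpNormNN μ (fun x => ENNReal.ofReal |Y t₀ x|) p
        + lpNormNN μ (fun x => ∑' j, G j x) p := step2
    _ = lpNorm μ (Y t₀) p + lpNormNN μ (fun x => ∑' j, G j x) p := by rw [eq0]
    _ ≤ lpNorm μ (Y t₀) p + ∑' j, lpNormNN μ (G j) p := add_le_add le_rfl mink
    _ ≤ lpNorm μ (Y t₀) p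
        + ∑' k : ℕ, ENNReal.ofReal (θ ^ k) * ((F (k + 1)).card : ℝ≥0∞) ^ (1 / p) :=
        add_le_add le_rfl (ENNReal.tsum_le_tsum hGbound)
end

section
/- Polynomial entropy, L^p form (inequality (3.11)). Let ψ ∈ Ψ(a,b), let T be a finite nonempty set, let Y(t) : X → ℝ be measurable for each t ∈ T, and let d be a pseudometric on T. Assume: (i) ‖Y(t)‖_{L^p(μ)} ≤ ψ(p) for all t ∈ T and p ∈ (a,b); (ii) ‖Y(t) − Y(s)‖_{L^p(μ)} ≤ ψ(p)·d(t,s) for all t, s ∈ T and p ∈ (a,b); (iii) there are κ > 0 and C₀ ≥ 1 such that for every ε ∈ (0,1] there exists an ε-net of (T, d) of cardinality at most C₀ ε^{−κ}. Then there is a constant C depending only on C₀ and κ (in particular not on T, ψ or p) such that for every p ∈ (a,b) with p > max(κ,1): ‖max_{t∈T} Y(t)‖_{L^p(μ)} ≤ C · ψ(p) · p/(p − κ). -/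
open MeasureTheory ENNReal Set

lemma measurable_finsetSup {X ι : Type*} [MeasurableSpace X] (F : Finset ι)
    (g : ι → X → ℝ≥0∞) (hg : ∀ i, Measurable (g i)) :
    Measurable fun x => F.sup fun i => g i x := by
  classical
  induction F using Finset.cons_induction with
  | empty => simpa using measurable_const
  | cons a s ha ih => simpa [Finset.sup_cons] using (hg a).max ih

lemma lp_sum_le {X ι : Type*} [MeasurableSpace X] {μ : Measure X} (F : Finset ι)
    (g : ι → X → ℝ≥0∞) (hg : ∀ i, Measurable (g i)) {p : ℝ} (hp : 1 ≤ p) :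
    (∫⁻ x, (∑ i ∈ F, g i x) ^ p ∂μ) ^ (1/p) ≤ ∑ i ∈ F, (∫⁻ x, g i x ^ p ∂μ) ^ (1/p) := by
  classical
  have hp0 : 0 < p := lt_of_lt_of_le zero_lt_one hp
  induction F using Finset.cons_induction with
  | empty =>
      have h1p : 0 < 1/p := by positivity
      simp only [Finset.sum_empty, ENNReal.zero_rpow_of_pos hp0, lintegral_zero,
        ENNReal.zero_rpow_of_pos h1p, le_refl]
  | cons a s ha ih =>
      simp only [Finset.sum_cons]
      have hA := ENNReal.lintegral_Lp_add_le (μ := μ) (f := fun x => g a x)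
        (g := fun x => ∑ i ∈ s, g i x) (hg a).aemeasurable
        (Finset.measurable_sum s fun i _ => hg i).aemeasurable hp
      simp only [Pi.add_apply] at hA
      exact hA.trans (add_le_add_right ih _)

lemma lp_sup_le {X ι : Type*} [MeasurableSpace X] {μ : Measure X} (F : Finset ι)
    (hF : F.Nonempty) (g : ι → X → ℝ≥0∞) (hg : ∀ i, Measurable (g i))
    {p : ℝ} (hp : 0 < p) {B : ℝ≥0∞}
    (hB : ∀ i ∈ F, (∫⁻ x, g i x ^ p ∂μ) ^ (1/p) ≤ B) :
    (∫⁻ x, (F.sup fun i => g i x) ^ p ∂μ) ^ (1/p) ≤ (F.card : ℝ≥0∞) ^ (1/p) * B := by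
  have h2 : (∫⁻ x, (F.sup fun i => g i x) ^ p ∂μ) ≤ ∑ i ∈ F, ∫⁻ x, g i x ^ p ∂μ := by
    have hgp : ∀ i, Measurable fun x => g i x ^ p :=
      fun i => ENNReal.continuous_rpow_const.measurable.comp (hg i)
    rw [← lintegral_finset_sum F fun i _ => hgp i]
    refine lintegral_mono fun x => ?_
    obtain ⟨i₀, hi₀, he⟩ := Finset.exists_mem_eq_sup F hF fun i => g i x
    rw [he]
    exact Finset.single_le_sum (f := fun i => g i x ^ p) (fun i _ => zero_le) hi₀
  have h3 : ∀ i ∈ F, (∫⁻ x, g i x ^ p ∂μ) ≤ B ^ p := by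
    intro i hi
    have h := ENNReal.rpow_le_rpow (hB i hi) hp.le
    rwa [← ENNReal.rpow_mul, one_div_mul_cancel hp.ne', ENNReal.rpow_one] at h
  have h4 : (∫⁻ x, (F.sup fun i => g i x) ^ p ∂μ) ≤ (F.card : ℝ≥0∞) * B ^ p := by
    refine h2.trans ?_
    calc ∑ i ∈ F, ∫⁻ x, g i x ^ p ∂μ ≤ ∑ _i ∈ F, B ^ p := Finset.sum_le_sum h3
      _ = (F.card : ℝ≥0∞) * B ^ p := by rw [Finset.sum_const, nsmul_eq_mul]
  calc (∫⁻ x, (F.sup fun i => g i x) ^ p ∂μ) ^ (1/p)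
      ≤ ((F.card : ℝ≥0∞) * B ^ p) ^ (1/p) := ENNReal.rpow_le_rpow h4 (by positivity)
    _ = (F.card : ℝ≥0∞) ^ (1/p) * B := by
        rw [ENNReal.mul_rpow_of_nonneg _ _ (by positivity), ← ENNReal.rpow_mul,
          mul_one_div_cancel hp.ne', ENNReal.rpow_one]

lemma geom_sum_le_inv {r : ℝ} (h0 : 0 ≤ r) (h1 : r < 1) (n : ℕ) :
    ∑ k ∈ Finset.range n, r ^ k ≤ (1 - r)⁻¹ := by
  have hs : Summable fun k : ℕ => r ^ k := summable_geometric_of_lt_one h0 h1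
  have h := Summable.sum_le_tsum (Finset.range n) (fun k _ => pow_nonneg h0 k) hs
  rwa [tsum_geometric_of_lt_one h0 h1] at h

lemma one_sub_two_rpow {δ : ℝ} (h0 : 0 < δ) (h1 : δ ≤ 1) : δ/3 ≤ 1 - (2:ℝ) ^ (-δ) := by
  have hlog : (0.6931471803 : ℝ) < Real.log 2 := Real.log_two_gt_d9
  have h2 : (2:ℝ) ^ (-δ) = (Real.exp (δ * Real.log 2))⁻¹ := by
    rw [Real.rpow_def_of_pos two_pos, ← Real.exp_neg]
    ring_nf
  rw [h2]
  have hexp : 1 + δ * Real.log 2 ≤ Real.exp (δ * Real.log 2) := by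
    have := Real.add_one_le_exp (δ * Real.log 2); linarith
  have hpos : 0 < Real.exp (δ * Real.log 2) := Real.exp_pos _
  have hc : Real.exp (δ * Real.log 2) * (Real.exp (δ * Real.log 2))⁻¹ = 1 :=
    mul_inv_cancel₀ hpos.ne'
  have hinv0 : 0 < (Real.exp (δ * Real.log 2))⁻¹ := by positivity
  nlinarith [mul_pos h0 hpos, mul_pos h0 hinv0]


lemma lpNorm_eq_abs {X : Type*} [MeasurableSpace X] (μ : Measure X) (f : X → ℝ) {p : ℝ}
    (hp : 0 ≤ p) :
    lpNorm μ f p = (∫⁻ x, (ENNReal.ofReal |f x|) ^ p ∂μ) ^ (1/p) := by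
  unfold _root_.lpNorm
  congr 1
  exact lintegral_congr fun x => (ENNReal.ofReal_rpow_of_nonneg (abs_nonneg _) hp).symm

/-- Polynomial entropy, `L^p` form (inequality (3.11)). -/
theorem polynomial_entropy_lp (κ C₀ : ℝ) (hκ : 0 < κ) (hC₀ : 1 ≤ C₀) :
    ∃ C : ℝ, 0 < C ∧
      ∀ (X : Type*) [MeasurableSpace X], ∀ (μ : Measure X) [SigmaFinite μ],
      ∀ (a : ℝ) (b : ℝ≥0∞), 1 ≤ a → ENNReal.ofReal a < b →
      ∀ (ψ : ℝ → ℝ), IsPsi a b ψ →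
      ∀ (T : Type*) [PseudoMetricSpace T] [Fintype T] [Nonempty T],
      ∀ (Y : T → X → ℝ), (∀ t, Measurable (Y t)) →
      (∀ t : T, ∀ p ∈ expSet a b, lpNorm μ (Y t) p ≤ ENNReal.ofReal (ψ p)) →
      (∀ t s : T, ∀ p ∈ expSet a b,
        lpNorm μ (fun x => Y t x - Y s x) p ≤ ENNReal.ofReal (ψ p * dist t s)) →
      (∀ ε : ℝ, 0 < ε → ε ≤ 1 → ∃ F : Finset T,
        ((F.card : ℝ) ≤ C₀ * ε ^ (-κ)) ∧ ∀ t : T, ∃ s ∈ F, dist t s ≤ ε) →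
      ∀ p ∈ expSet a b, max κ 1 < p →
        lpNorm μ (fun x => ⨆ t, Y t x) p ≤ ENNReal.ofReal (C * ψ p * (p / (p - κ))) := by
  classical
  refine ⟨8 * C₀, by linarith, ?_⟩
  intro X _ μ _ a b ha hab ψ hψ T _ _ _ Y hYmeas hYlp hYdiff hnet p hp hpmax
  have hκp : κ < p := (le_max_left κ 1).trans_lt hpmax
  have h1p : 1 < p := (le_max_right κ 1).trans_lt hpmax
  have hp0 : 0 < p := lt_trans zero_lt_one h1p
  have hψ1 : 1 ≤ ψ p := hψ.one_le p hp
  have hψ0 : 0 < ψ p := lt_of_lt_of_le zero_lt_one hψ1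
  set θ : ℝ := κ / p with hθdef
  have hθ0 : 0 < θ := div_pos hκ hp0
  have hθ1 : θ < 1 := (div_lt_one hp0).mpr hκp
  set δ : ℝ := 1 - θ with hδdef
  have hδ0 : 0 < δ := by simp only [hδdef]; linarith
  have hδ1 : δ ≤ 1 := by simp only [hδdef]; linarith
  -- nets
  have hnets : ∀ n : ℕ, ∃ F : Finset T,
      ((F.card : ℝ) ≤ C₀ * 2 ^ (κ * n)) ∧ ∀ t, ∃ s ∈ F, dist t s ≤ (2:ℝ) ^ (-(n:ℝ)) := by
    intro n
    have hε0 : (0:ℝ) < 2 ^ (-(n:ℝ)) := Real.rpow_pos_of_pos two_pos _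
    have hε1 : (2:ℝ) ^ (-(n:ℝ)) ≤ 1 :=
      Real.rpow_le_one_of_one_le_of_nonpos one_le_two (neg_nonpos.mpr (Nat.cast_nonneg n))
    obtain ⟨F, hcard, hcov⟩ := hnet _ hε0 hε1
    refine ⟨F, ?_, hcov⟩
    have he : ((2:ℝ) ^ (-(n:ℝ))) ^ (-κ) = 2 ^ (κ * n) := by
      rw [← Real.rpow_mul (by norm_num : (0:ℝ) ≤ 2)]
      congr 1
      ring
    rwa [he] at hcard
  choose F hFcard hFcov using hnets
  choose π hπmem hπdist using hFcov
  have hFne : ∀ n, (F n).Nonempty := fun n => ⟨π n (Classical.arbitrary T), hπmem n _⟩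
  set K := Fintype.card T with hKdef
  -- the chain
  let c : T → ℕ → T := fun t => Nat.rec (π K t) fun j cj => π (K - (j+1)) cj
  have hc0 : ∀ t, c t 0 = π K t := fun t => rfl
  have hcsucc : ∀ t j, c t (j+1) = π (K - (j+1)) (c t j) := fun t j => rfl
  have hcmem : ∀ t j, c t j ∈ F (K - j) := by
    intro t j
    induction j with
    | zero => exact hπmem K t
    | succ j ih => exact hπmem _ _
  -- the dominating functions
  let gR : T → X → ℝ≥0∞ := fun t x => ENNReal.ofReal |Y t x - Y (π K t) x|
  let R : X → ℝ≥0∞ := fun x => Finset.univ.sup fun t => gR t x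
  let gD : ℕ → T → X → ℝ≥0∞ := fun k s x => ENNReal.ofReal |Y s x - Y (π k s) x|
  let D : ℕ → X → ℝ≥0∞ := fun k x => (F (k+1)).sup fun s => gD k s x
  let gM : T → X → ℝ≥0∞ := fun t x => ENNReal.ofReal |Y t x|
  let M : X → ℝ≥0∞ := fun x => (F 0).sup fun s => gM s x
  let S : X → ℝ≥0∞ := fun x => ∑ k ∈ Finset.range K, D k x
  -- measurability
  have hgRmeas : ∀ t, Measurable (gR t) :=
    fun t => ((hYmeas t).sub (hYmeas (π K t))).abs.ennreal_ofReal
  have hRmeas : Measurable R := measurable_finsetSup _ _ hgRmeas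
  have hgDmeas : ∀ k s, Measurable (gD k s) :=
    fun k s => ((hYmeas s).sub (hYmeas (π k s))).abs.ennreal_ofReal
  have hDmeas : ∀ k, Measurable (D k) := fun k => measurable_finsetSup _ _ (hgDmeas k)
  have hgMmeas : ∀ t, Measurable (gM t) := fun t => (hYmeas t).abs.ennreal_ofReal
  have hMmeas : Measurable M := measurable_finsetSup _ _ hgMmeas
  have hSmeas : Measurable S := Finset.measurable_sum _ fun k _ => hDmeas k
  -- pointwise chaining bound
  have key : ∀ x t, ENNReal.ofReal |Y t x| ≤ R x + S x + M x := by
    intro x t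
    have h1 : |Y (c t 0) x - Y (c t K) x| ≤
        ∑ j ∈ Finset.range K, |Y (c t j) x - Y (c t (j+1)) x| := by
      have := dist_le_range_sum_dist (fun j => Y (c t j) x) K
      simpa only [Real.dist_eq] using this
    have h2 : |Y t x| ≤ |Y t x - Y (c t 0) x| +
        (∑ j ∈ Finset.range K, |Y (c t j) x - Y (c t (j+1)) x|) + |Y (c t K) x| := by
      have ha' := abs_add_le (Y t x - Y (c t 0) x) (Y (c t 0) x)
      have hb' := abs_add_le (Y (c t 0) x - Y (c t K) x) (Y (c t K) x)
      simp only [sub_add_cancel] at ha' hb'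
      linarith
    have hsum0 : (0:ℝ) ≤ ∑ j ∈ Finset.range K, |Y (c t j) x - Y (c t (j+1)) x| :=
      Finset.sum_nonneg fun j _ => abs_nonneg _
    calc ENNReal.ofReal |Y t x|
        ≤ ENNReal.ofReal (|Y t x - Y (c t 0) x| +
            (∑ j ∈ Finset.range K, |Y (c t j) x - Y (c t (j+1)) x|) + |Y (c t K) x|) :=
          ENNReal.ofReal_le_ofReal h2
      _ = ENNReal.ofReal |Y t x - Y (c t 0) x| +
            ENNReal.ofReal (∑ j ∈ Finset.range K, |Y (c t j) x - Y (c t (j+1)) x|) +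
            ENNReal.ofReal |Y (c t K) x| := by
          rw [ENNReal.ofReal_add (by positivity) (abs_nonneg _),
            ENNReal.ofReal_add (abs_nonneg _) hsum0]
      _ ≤ R x + S x + M x := by
          refine add_le_add (add_le_add ?_ ?_) ?_
          · exact Finset.le_sup (f := fun t => gR t x) (Finset.mem_univ t)
          · rw [ENNReal.ofReal_sum_of_nonneg fun j _ => abs_nonneg _]
            have hSx : S x = ∑ j ∈ Finset.range K, D (K - 1 - j) x :=
              (Finset.sum_range_reflect (fun k => D k x) K).symm
            rw [hSx]
            refine Finset.sum_le_sum fun j hj => ?_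
            have hjK : j < K := Finset.mem_range.mp hj
            have hsub : K - 1 - j = K - (j+1) := by omega
            rw [hsub]
            have hmem : c t j ∈ F ((K - (j+1)) + 1) := by
              have h' := hcmem t j
              have : K - j = (K - (j+1)) + 1 := by omega
              rwa [this] at h'
            exact Finset.le_sup (f := fun s => gD (K - (j+1)) s x) hmem
          · have hmem : c t K ∈ F 0 := by
              have h' := hcmem t K
              simpa using h'
            exact Finset.le_sup (f := fun s => gM s x) hmem
  -- pointwise bound for the sup
  have hsup : ∀ x, ENNReal.ofReal |⨆ t, Y t x| ≤ R x + S x + M x := by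
    intro x
    obtain ⟨t₀, ht₀⟩ := Finite.exists_max fun t => Y t x
    have heq : (⨆ t, Y t x) = Y t₀ x :=
      le_antisymm (ciSup_le ht₀) (le_ciSup (f := fun t => Y t x) (Finite.bddAbove_range _) t₀)
    rw [heq]
    exact key x t₀
  -- bounds for the three pieces
  have h1vp : (0:ℝ) ≤ 1/p := (one_div_pos.mpr hp0).le
  have h1vp1 : 1/p ≤ 1 := by
    rw [div_le_one hp0]; linarith
  have hRlp : (∫⁻ x, R x ^ p ∂μ) ^ (1/p) ≤ ENNReal.ofReal (ψ p) := by
    have hb : ∀ t ∈ (Finset.univ : Finset T), (∫⁻ x, gR t x ^ p ∂μ) ^ (1/p)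
        ≤ ENNReal.ofReal (ψ p * (2:ℝ) ^ (-(K:ℝ))) := by
      intro t _
      have h1 : (∫⁻ x, gR t x ^ p ∂μ) ^ (1/p)
          = lpNorm μ (fun x => Y t x - Y (π K t) x) p :=
        (lpNorm_eq_abs μ _ hp0.le).symm
      rw [h1]
      exact (hYdiff t (π K t) p hp).trans
        (ENNReal.ofReal_le_ofReal (mul_le_mul_of_nonneg_left (hπdist K t) hψ0.le))
    have hle := lp_sup_le Finset.univ Finset.univ_nonempty gR hgRmeas hp0 hb
    rw [Finset.card_univ] at hle
    refine hle.trans ?_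
    rw [← ENNReal.ofReal_natCast (Fintype.card T),
      ENNReal.ofReal_rpow_of_nonneg (Nat.cast_nonneg _) h1vp,
      ← ENNReal.ofReal_mul (Real.rpow_nonneg (Nat.cast_nonneg _) _)]
    refine ENNReal.ofReal_le_ofReal ?_
    have hK1 : (1:ℝ) ≤ (Fintype.card T : ℝ) := by
      exact_mod_cast Fintype.card_pos (α := T)
    have hA : ((Fintype.card T : ℝ)) ^ (1/p) ≤ (Fintype.card T : ℝ) := by
      calc ((Fintype.card T : ℝ)) ^ (1/p) ≤ ((Fintype.card T : ℝ)) ^ (1:ℝ) :=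
            Real.rpow_le_rpow_of_exponent_le hK1 h1vp1
        _ = (Fintype.card T : ℝ) := Real.rpow_one _
    have h2K : (Fintype.card T : ℝ) * 2 ^ (-(K:ℝ)) ≤ 1 := by
      have hlt : (Fintype.card T : ℝ) ≤ 2 ^ (K:ℕ) := by
        exact_mod_cast (Nat.lt_two_pow_self (n := K)).le
      have h2pos : (0:ℝ) < 2 ^ (K:ℕ) := by positivity
      have heq2 : (2:ℝ) ^ (-(K:ℝ)) = ((2:ℝ) ^ (K:ℕ))⁻¹ := by
        rw [Real.rpow_neg (by norm_num), Real.rpow_natCast]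
      rw [heq2, ← div_eq_mul_inv, div_le_one h2pos]
      exact hlt
    have hr2 : (0:ℝ) < 2 ^ (-(K:ℝ)) := Real.rpow_pos_of_pos two_pos _
    calc ((Fintype.card T : ℝ)) ^ (1/p) * (ψ p * 2 ^ (-(K:ℝ)))
        ≤ (Fintype.card T : ℝ) * (ψ p * 2 ^ (-(K:ℝ))) :=
          mul_le_mul_of_nonneg_right hA (mul_nonneg hψ0.le hr2.le)
      _ = ψ p * ((Fintype.card T : ℝ) * 2 ^ (-(K:ℝ))) := by ring
      _ ≤ ψ p * 1 := mul_le_mul_of_nonneg_left h2K hψ0.le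
      _ = ψ p := mul_one _
  have hSlp : (∫⁻ x, S x ^ p ∂μ) ^ (1/p) ≤ ENNReal.ofReal (6 * C₀ * ψ p * (p / (p - κ))) := by
    set q2 : ℕ → ℝ := fun k => (C₀ * 2 ^ (κ * ((k:ℝ)+1))) ^ (1/p) * (ψ p * 2 ^ (-(k:ℝ)))
      with hq2def
    have hq2nn : ∀ k : ℕ, 0 ≤ q2 k := fun k =>
      mul_nonneg (Real.rpow_nonneg (mul_nonneg (by linarith)
        (Real.rpow_pos_of_pos two_pos _).le) _)
        (mul_nonneg hψ0.le (Real.rpow_pos_of_pos two_pos _).le)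
    have hDlp : ∀ k ∈ Finset.range K, (∫⁻ x, D k x ^ p ∂μ) ^ (1/p)
        ≤ ENNReal.ofReal (q2 k) := by
      intro k _
      have hb : ∀ s ∈ F (k+1), (∫⁻ x, gD k s x ^ p ∂μ) ^ (1/p)
          ≤ ENNReal.ofReal (ψ p * 2 ^ (-(k:ℝ))) := by
        intro s _
        have h1 : (∫⁻ x, gD k s x ^ p ∂μ) ^ (1/p)
            = lpNorm μ (fun x => Y s x - Y (π k s) x) p :=
          (lpNorm_eq_abs μ _ hp0.le).symm
        rw [h1]
        exact (hYdiff s (π k s) p hp).trans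
          (ENNReal.ofReal_le_ofReal (mul_le_mul_of_nonneg_left (hπdist k s) hψ0.le))
      refine (lp_sup_le (F (k+1)) (hFne (k+1)) (gD k) (hgDmeas k) hp0 hb).trans ?_
      have hcard : (((F (k+1)).card : ℕ) : ℝ) ≤ C₀ * 2 ^ (κ * ((k:ℝ)+1)) := by
        have h' := hFcard (k+1)
        push_cast at h' ⊢
        exact h'
      rw [← ENNReal.ofReal_natCast ((F (k+1)).card),
        ENNReal.ofReal_rpow_of_nonneg (Nat.cast_nonneg _) h1vp,
        ← ENNReal.ofReal_mul (Real.rpow_nonneg (Nat.cast_nonneg _) _)]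
      exact ENNReal.ofReal_le_ofReal (mul_le_mul_of_nonneg_right
        (Real.rpow_le_rpow (Nat.cast_nonneg _) hcard h1vp)
        (mul_nonneg hψ0.le (Real.rpow_pos_of_pos two_pos _).le))
    refine (lp_sum_le (Finset.range K) D hDmeas h1p.le).trans ?_
    refine (Finset.sum_le_sum hDlp).trans ?_
    rw [← ENNReal.ofReal_sum_of_nonneg fun k _ => hq2nn k]
    refine ENNReal.ofReal_le_ofReal ?_
    -- real estimate
    set r : ℝ := 2 ^ (θ - 1) with hrdef
    have hr0 : 0 ≤ r := (Real.rpow_pos_of_pos two_pos _).le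
    have hr1 : r < 1 := Real.rpow_lt_one_of_one_lt_of_neg one_lt_two (by linarith)
    have hterm : ∀ k : ℕ, q2 k ≤ 2 * C₀ * ψ p * r ^ k := by
      intro k
      have e1 : (C₀ * 2 ^ (κ * ((k:ℝ)+1))) ^ (1/p)
          = C₀ ^ (1/p) * (2:ℝ) ^ (θ * ((k:ℝ)+1)) := by
        rw [Real.mul_rpow (by linarith) (Real.rpow_pos_of_pos two_pos _).le,
          ← Real.rpow_mul (by norm_num : (0:ℝ) ≤ 2)]
        congr 1
        rw [hθdef]
        ring
      have e2 : (2:ℝ) ^ (θ * ((k:ℝ)+1)) * 2 ^ (-(k:ℝ)) = 2 ^ θ * r ^ k := by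
        rw [hrdef, ← Real.rpow_natCast ((2:ℝ) ^ (θ - 1)) k,
          ← Real.rpow_mul (by norm_num : (0:ℝ) ≤ 2),
          ← Real.rpow_add two_pos, ← Real.rpow_add two_pos]
        congr 1
        ring
      have hc : C₀ ^ (1/p) ≤ C₀ := by
        calc C₀ ^ (1/p) ≤ C₀ ^ (1:ℝ) := Real.rpow_le_rpow_of_exponent_le hC₀ h1vp1
          _ = C₀ := Real.rpow_one _
      have h2θ : (2:ℝ) ^ θ ≤ 2 := by
        calc (2:ℝ) ^ θ ≤ (2:ℝ) ^ (1:ℝ) :=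
              Real.rpow_le_rpow_of_exponent_le one_le_two hθ1.le
          _ = 2 := Real.rpow_one 2
      calc q2 k = C₀ ^ (1/p) * (2:ℝ) ^ (θ * ((k:ℝ)+1)) * (ψ p * 2 ^ (-(k:ℝ))) := by
            simp only [hq2def]
            rw [e1]
        _ = C₀ ^ (1/p) * ψ p * ((2:ℝ) ^ (θ * ((k:ℝ)+1)) * 2 ^ (-(k:ℝ))) := by ring
        _ = C₀ ^ (1/p) * ψ p * (2 ^ θ * r ^ k) := by rw [e2]
        _ ≤ C₀ * ψ p * (2 * r ^ k) := by
            have h1' : C₀ ^ (1/p) * ψ p ≤ C₀ * ψ p := mul_le_mul_of_nonneg_right hc hψ0.le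
            have h2' : (2:ℝ) ^ θ * r ^ k ≤ 2 * r ^ k :=
              mul_le_mul_of_nonneg_right h2θ (pow_nonneg hr0 k)
            exact mul_le_mul h1' h2'
              (mul_nonneg (Real.rpow_pos_of_pos two_pos _).le (pow_nonneg hr0 k))
              (mul_nonneg (by linarith) hψ0.le)
        _ = 2 * C₀ * ψ p * r ^ k := by ring
    have hfac : (0:ℝ) ≤ 2 * C₀ * ψ p := by nlinarith
    have hsum : ∑ k ∈ Finset.range K, q2 k ≤ 2 * C₀ * ψ p * (1 - r)⁻¹ := by
      calc ∑ k ∈ Finset.range K, q2 k ≤ ∑ k ∈ Finset.range K, 2 * C₀ * ψ p * r ^ k :=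
            Finset.sum_le_sum fun k _ => hterm k
        _ = 2 * C₀ * ψ p * ∑ k ∈ Finset.range K, r ^ k := by rw [← Finset.mul_sum]
        _ ≤ 2 * C₀ * ψ p * (1 - r)⁻¹ :=
            mul_le_mul_of_nonneg_left (geom_sum_le_inv hr0 hr1 K) hfac
    refine hsum.trans ?_
    have hrδ : r = 2 ^ (-δ) := by
      rw [hrdef]
      congr 1
      rw [hδdef]
      ring
    have h13 : δ/3 ≤ 1 - r := by
      rw [hrδ]
      exact one_sub_two_rpow hδ0 hδ1
    have hδ3 : (0:ℝ) < δ/3 := by linarith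
    have hinv : (1 - r)⁻¹ ≤ (δ/3)⁻¹ := by
      apply inv_anti₀ hδ3 h13
    have hδeq : (δ/3)⁻¹ = 3 * (p / (p - κ)) := by
      rw [hδdef, hθdef, inv_div]
      field_simp
    calc 2 * C₀ * ψ p * (1 - r)⁻¹ ≤ 2 * C₀ * ψ p * (δ/3)⁻¹ :=
          mul_le_mul_of_nonneg_left hinv hfac
      _ = 6 * C₀ * ψ p * (p / (p - κ)) := by rw [hδeq]; ring
  have hMlp : (∫⁻ x, M x ^ p ∂μ) ^ (1/p) ≤ ENNReal.ofReal (C₀ * ψ p) := by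
    have hb : ∀ s ∈ F 0, (∫⁻ x, gM s x ^ p ∂μ) ^ (1/p) ≤ ENNReal.ofReal (ψ p) := by
      intro s _
      have h1 : (∫⁻ x, gM s x ^ p ∂μ) ^ (1/p) = lpNorm μ (Y s) p :=
        (lpNorm_eq_abs μ _ hp0.le).symm
      rw [h1]
      exact hYlp s p hp
    refine (lp_sup_le (F 0) (hFne 0) gM hgMmeas hp0 hb).trans ?_
    have hcard0 : (((F 0).card : ℕ) : ℝ) ≤ C₀ := by
      have h' := hFcard 0
      simpa using h'
    rw [← ENNReal.ofReal_natCast ((F 0).card),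
      ENNReal.ofReal_rpow_of_nonneg (Nat.cast_nonneg _) h1vp,
      ← ENNReal.ofReal_mul (Real.rpow_nonneg (Nat.cast_nonneg _) _)]
    refine ENNReal.ofReal_le_ofReal ?_
    have hcc : (((F 0).card : ℕ) : ℝ) ^ (1/p) ≤ C₀ := by
      calc (((F 0).card : ℕ) : ℝ) ^ (1/p) ≤ C₀ ^ (1/p) :=
            Real.rpow_le_rpow (Nat.cast_nonneg _) hcard0 h1vp
        _ ≤ C₀ ^ (1:ℝ) := Real.rpow_le_rpow_of_exponent_le hC₀ h1vp1
        _ = C₀ := Real.rpow_one _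
    exact mul_le_mul_of_nonneg_right hcc hψ0.le
  -- assemble
  rw [lpNorm_eq_abs μ _ hp0.le]
  have step1 : (∫⁻ x, (ENNReal.ofReal |⨆ t, Y t x|) ^ p ∂μ) ^ (1/p)
      ≤ (∫⁻ x, (R x + S x + M x) ^ p ∂μ) ^ (1/p) :=
    ENNReal.rpow_le_rpow
      (lintegral_mono fun x => ENNReal.rpow_le_rpow (hsup x) hp0.le) (by positivity)
  have step2 : (∫⁻ x, (R x + S x + M x) ^ p ∂μ) ^ (1/p) ≤
      (∫⁻ x, R x ^ p ∂μ) ^ (1/p) + (∫⁻ x, S x ^ p ∂μ) ^ (1/p) +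
        (∫⁻ x, M x ^ p ∂μ) ^ (1/p) := by
    have hA := ENNReal.lintegral_Lp_add_le (μ := μ) (f := fun x => R x + S x) (g := M)
      (hRmeas.add hSmeas).aemeasurable hMmeas.aemeasurable h1p.le
    have hB := ENNReal.lintegral_Lp_add_le (μ := μ) (f := R) (g := S)
      hRmeas.aemeasurable hSmeas.aemeasurable h1p.le
    simp only [Pi.add_apply] at hA hB
    exact hA.trans (add_le_add_left hB _)
  refine (step1.trans step2).trans ?_
  refine (add_le_add (add_le_add hRlp hSlp) hMlp).trans ?_
  have hq0 : 0 < p / (p - κ) := div_pos hp0 (by linarith)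
  have hq1 : 1 ≤ p / (p - κ) := by
    rw [le_div_iff₀ (by linarith : (0:ℝ) < p - κ)]
    linarith
  have hB0 : (0:ℝ) ≤ 6 * C₀ * ψ p * (p / (p - κ)) :=
    mul_nonneg (mul_nonneg (mul_nonneg (by norm_num) (by linarith)) hψ0.le) hq0.le
  have hC0' : (0:ℝ) ≤ C₀ * ψ p := mul_nonneg (by linarith) hψ0.le
  rw [← ENNReal.ofReal_add hψ0.le hB0,
    ← ENNReal.ofReal_add (by linarith [hψ0.le, hB0] : (0:ℝ) ≤ ψ p + 6 * C₀ * ψ p * (p / (p - κ))) hC0']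
  refine ENNReal.ofReal_le_ofReal ?_
  have h1' : C₀ * ψ p ≤ C₀ * ψ p * (p / (p - κ)) :=
    le_mul_of_one_le_right hC0' hq1
  have h2' : ψ p ≤ C₀ * ψ p := le_mul_of_one_le_left hψ0.le hC₀
  nlinarith [h1', h2', hB0]
end

section
/- Polynomial entropy, norm form (inequality (3.12)). Let ψ ∈ Ψ(a,b), let κ and C₀ satisfy 0 < κ < a and C₀ ≥ 1, let T be a finite nonempty set and Y(t) : X → ℝ measurable for each t ∈ T with sup_{t∈T} ‖Y(t)‖_{G(ψ)} ≤ 1. Write d_ψ(t,s) = ‖Y(t) − Y(s)‖_{G(ψ)} and assume that for every ε ∈ (0,1] there exists an ε-net of (T, d_ψ) of cardinality at most C₀ ε^{−κ}. Then, setting ψ^{(κ)}(p) = ψ(p)·p/(p − κ) for p ∈ (a,b), there is a constant C depending only on C₀ and κ such that ‖max_{t∈T} Y(t)‖_{G(ψ^{(κ)})} := sup_{p∈(a,b)} ‖max_{t∈T} Y(t)‖_{L^p(μ)}/ψ^{(κ)}(p) ≤ C. -/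
open MeasureTheory ENNReal Set

lemma lpNorm_eq_eLpNorm {X : Type*} [MeasurableSpace X] (μ : Measure X) (f : X → ℝ) {p : ℝ}
    (hp : 0 < p) : lpNorm μ f p = eLpNorm f (ENNReal.ofReal p) μ := by
  rw [eLpNorm_eq_lintegral_rpow_enorm_toReal (by simp [ENNReal.ofReal_eq_zero, not_le, hp])
      ENNReal.ofReal_ne_top, ENNReal.toReal_ofReal hp.le]
  unfold _root_.lpNorm
  congr 1
  refine lintegral_congr fun x => ?_
  rw [Real.enorm_eq_ofReal_abs, ENNReal.ofReal_rpow_of_nonneg (abs_nonneg _) hp.le]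

lemma eLpNorm_le_of_glNorm {X : Type*} [MeasurableSpace X] (μ : Measure X) {a : ℝ} {b : ℝ≥0∞}
    {ψ : ℝ → ℝ} {f : X → ℝ} {c : ℝ≥0∞} {p : ℝ} (hp : p ∈ expSet a b) (hp0 : 0 < p)
    (hψ : 0 < ψ p) (h : glNorm μ a b ψ f ≤ c) :
    eLpNorm f (ENNReal.ofReal p) μ ≤ c * ENNReal.ofReal (ψ p) := by
  have h1 : lpNorm μ f p / ENNReal.ofReal (ψ p) ≤ c :=
    le_trans (le_iSup₂ (f := fun q (_ : q ∈ expSet a b) => lpNorm μ f q / ENNReal.ofReal (ψ q))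
      p hp) h
  rw [← lpNorm_eq_eLpNorm μ f hp0]
  rwa [ENNReal.div_le_iff_le_mul (Or.inl (by simp [ENNReal.ofReal_eq_zero, not_le, hψ]))
    (Or.inl ENNReal.ofReal_ne_top)] at h1

lemma maxLp {X : Type*} [MeasurableSpace X] (μ : Measure X) {ι : Type*}
    {s : Finset ι} (hs : s.Nonempty) {g : ι → X → ℝ} (hg : ∀ i ∈ s, Measurable (g i))
    {p : ℝ} (hp : 0 < p) {M : ℝ≥0∞}
    (hM : ∀ i ∈ s, eLpNorm (g i) (ENNReal.ofReal p) μ ≤ M) :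
    eLpNorm (fun x => s.sup' hs fun i => |g i x|) (ENNReal.ofReal p) μ
      ≤ (s.card : ℝ≥0∞) ^ (1 / p) * M := by
  have hq0 : (ENNReal.ofReal p) ≠ 0 := by simp [ENNReal.ofReal_eq_zero, not_le, hp]
  have hqt : (ENNReal.ofReal p) ≠ ⊤ := ENNReal.ofReal_ne_top
  have hgi : ∀ i ∈ s, (∫⁻ x, (‖g i x‖₊ : ℝ≥0∞) ^ p ∂μ) ≤ M ^ p := by
    intro i hi
    have h1 := ENNReal.rpow_le_rpow (hM i hi) hp.le
    rwa [eLpNorm_eq_lintegral_rpow_enorm_toReal hq0 hqt, ENNReal.toReal_ofReal hp.le,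
      ← ENNReal.rpow_mul, one_div_mul_cancel hp.ne', ENNReal.rpow_one] at h1
  rw [eLpNorm_eq_lintegral_rpow_enorm_toReal hq0 hqt, ENNReal.toReal_ofReal hp.le]
  have step : ∀ x, (‖s.sup' hs fun i => |g i x|‖₊ : ℝ≥0∞) ^ p
      ≤ ∑ i ∈ s, (‖g i x‖₊ : ℝ≥0∞) ^ p := by
    intro x
    obtain ⟨i, hi, heq⟩ := Finset.exists_mem_eq_sup' hs fun i => |g i x|
    rw [heq]
    have habs : ‖|g i x|‖₊ = ‖g i x‖₊ := by simp
    rw [habs]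
    exact Finset.single_le_sum (f := fun i => (‖g i x‖₊ : ℝ≥0∞) ^ p) (fun j _ => zero_le) hi
  calc (∫⁻ x, (‖s.sup' hs fun i => |g i x|‖₊ : ℝ≥0∞) ^ p ∂μ) ^ (1 / p)
      ≤ (∑ i ∈ s, ∫⁻ x, (‖g i x‖₊ : ℝ≥0∞) ^ p ∂μ) ^ (1 / p) := by
        refine ENNReal.rpow_le_rpow ?_ (by positivity)
        exact (lintegral_mono step).trans_eq
          (lintegral_finset_sum s fun i hi => ((hg i hi).enorm).pow_const p)
    _ ≤ ((s.card : ℝ≥0∞) * M ^ p) ^ (1 / p) := by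
        refine ENNReal.rpow_le_rpow ?_ (by positivity)
        simpa [nsmul_eq_mul] using Finset.sum_le_card_nsmul s _ _ hgi
    _ = (s.card : ℝ≥0∞) ^ (1 / p) * M := by
        rw [ENNReal.mul_rpow_of_nonneg _ _ (by positivity), ← ENNReal.rpow_mul,
          mul_one_div_cancel hp.ne', ENNReal.rpow_one]

lemma geom_bound {x : ℝ} (hx0 : 0 < x) (hx1 : x ≤ 1) (K : ℕ) :
    ∑ m ∈ Finset.range K, ((2:ℝ) ^ (-x)) ^ m ≤ 3 / x := by
  set r : ℝ := (2:ℝ) ^ (-x) with hr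
  have hr0 : 0 ≤ r := (Real.rpow_pos_of_pos two_pos _).le
  have hr1 : r < 1 := Real.rpow_lt_one_of_one_lt_of_neg one_lt_two (by linarith)
  have hsum : ∑ m ∈ Finset.range K, r ^ m ≤ (1 - r)⁻¹ := by
    have := Summable.sum_le_tsum (Finset.range K) (fun i _ => pow_nonneg hr0 i)
      (summable_geometric_of_lt_one hr0 hr1)
    rwa [tsum_geometric_of_lt_one hr0 hr1] at this
  refine hsum.trans ?_
  have hlog : (0.6931471803 : ℝ) < Real.log 2 := Real.log_two_gt_d9
  have hlog2 : Real.log 2 < 0.6931471808 := Real.log_two_lt_d9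
  have hrval : r = (Real.exp (Real.log 2 * x))⁻¹ := by
    rw [hr, Real.rpow_def_of_pos two_pos, mul_neg, Real.exp_neg]
  have hexp : 1 + Real.log 2 * x ≤ Real.exp (Real.log 2 * x) := by
    have := Real.add_one_le_exp (Real.log 2 * x); linarith
  have hexppos : (0:ℝ) < 1 + Real.log 2 * x := by nlinarith
  have hrle : r ≤ (1 + Real.log 2 * x)⁻¹ := by
    rw [hrval]
    exact inv_anti₀ hexppos hexp
  have hkey : r ≤ 1 - x / 3 := by
    refine hrle.trans ?_
    rw [inv_eq_one_div, div_le_iff₀ hexppos]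
    nlinarith [mul_nonneg hx0.le (sub_nonneg.mpr hx1), mul_pos hx0 hx0,
      mul_nonneg (mul_nonneg hx0.le hx0.le) (sub_nonneg.mpr hx1)]
  have h13 : 0 < x / 3 := by linarith
  have h2 : (1 - r)⁻¹ ≤ (x / 3)⁻¹ := by
    apply inv_anti₀ h13; linarith
  calc (1-r)⁻¹ ≤ (x/3)⁻¹ := h2
    _ = 3 / x := by rw [inv_div]

lemma cardpow {n : ℕ} {D : ℝ} (hD : 0 ≤ D) (hnD : (n:ℝ) ≤ D) {e : ℝ} (he : 0 ≤ e) :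
    (n : ℝ≥0∞) ^ e ≤ ENNReal.ofReal (D ^ e) := by
  rw [← ENNReal.ofReal_rpow_of_nonneg hD he, ← ENNReal.ofReal_natCast n]
  exact ENNReal.rpow_le_rpow (ENNReal.ofReal_le_ofReal hnD) he

/-- Polynomial entropy, norm form (inequality (3.12)). -/
theorem polynomial_entropy_BGL (κ C₀ : ℝ) (hκ : 0 < κ) (hC₀ : 1 ≤ C₀) :
    ∃ C : ℝ, 0 < C ∧
      ∀ (X : Type*) [MeasurableSpace X], ∀ (μ : Measure X) [SigmaFinite μ],
      ∀ (a : ℝ) (b : ℝ≥0∞), 1 ≤ a → ENNReal.ofReal a < b → κ < a →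
      ∀ (ψ : ℝ → ℝ), IsPsi a b ψ →
      ∀ (T : Type*) [Fintype T] [Nonempty T],
      ∀ (Y : T → X → ℝ), (∀ t, Measurable (Y t)) →
      (∀ t : T, glNorm μ a b ψ (Y t) ≤ 1) →
      (∀ ε : ℝ, 0 < ε → ε ≤ 1 → ∃ F : Finset T,
        ((F.card : ℝ) ≤ C₀ * ε ^ (-κ)) ∧
          ∀ t : T, ∃ s ∈ F, glNorm μ a b ψ (fun x => Y t x - Y s x) ≤ ENNReal.ofReal ε) →
      (⨆ p ∈ expSet a b,
          lpNorm μ (fun x => ⨆ t, Y t x) p / ENNReal.ofReal (ψ p * (p / (p - κ)))) ≤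
        ENNReal.ofReal C := by
  refine ⟨8 * C₀, by linarith, ?_⟩
  intro X _ μ _ a b ha hab hκa ψ hψ T _ _ Y hY hY1 hnet
  -- choose nets
  have hεpos : ∀ k : ℕ, (0:ℝ) < (2:ℝ) ^ (-(k:ℝ)) := fun k => Real.rpow_pos_of_pos two_pos _
  have hεle : ∀ k : ℕ, (2:ℝ) ^ (-(k:ℝ)) ≤ 1 := fun k =>
    Real.rpow_le_one_of_one_le_of_nonpos one_le_two (neg_nonpos.mpr (Nat.cast_nonneg k))
  choose F hFcard hFnet using fun k : ℕ => hnet ((2:ℝ) ^ (-(k:ℝ))) (hεpos k) (hεle k)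
  choose σ hσmem hσd using hFnet
  have hFcard' : ∀ k : ℕ, ((F k).card : ℝ) ≤ C₀ * (2:ℝ) ^ ((k:ℝ) * κ) := by
    intro k
    have h := hFcard k
    have heq : ((2:ℝ) ^ (-(k:ℝ))) ^ (-κ) = (2:ℝ) ^ ((k:ℝ) * κ) := by
      rw [← Real.rpow_mul (by norm_num : (0:ℝ) ≤ 2)]
      ring_nf
    rwa [heq] at h
  obtain ⟨t₀⟩ := ‹Nonempty T›
  have hneF : ∀ m : ℕ, (F m).Nonempty := fun m => ⟨σ m t₀, hσmem m t₀⟩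
  set K : ℕ := Fintype.card T with hKdef
  have hK1 : 1 ≤ K := Fintype.card_pos
  have hKT : (K:ℝ) * (2:ℝ) ^ (-(K:ℝ)) ≤ 1 := by
    have h2K : (K:ℝ) ≤ (2:ℝ) ^ (K:ℕ) := by
      have := (Nat.lt_two_pow_self (n := K)).le
      exact_mod_cast this
    have hrw : (2:ℝ) ^ (-(K:ℝ)) = ((2:ℝ) ^ (K:ℕ))⁻¹ := by
      rw [Real.rpow_neg (by norm_num : (0:ℝ) ≤ 2), Real.rpow_natCast]
    rw [hrw, ← div_eq_mul_inv, div_le_one (by positivity)]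
    exact h2K
  -- the chain
  set c : T → ℕ → T := fun t j =>
    Nat.rec (motive := fun _ => T) (σ K t) (fun j prev => σ (K - 1 - j) prev) j with hcdef
  have hc0 : ∀ t, c t 0 = σ K t := fun _ => rfl
  have hcs : ∀ t j, c t (j+1) = σ (K - 1 - j) (c t j) := fun _ _ => rfl
  have hcmem : ∀ t j, c t j ∈ F (K - j) := by
    intro t j
    induction j with
    | zero => exact hσmem K t
    | succ j ih =>
      rw [hcs, show K - (j+1) = K - 1 - j from by omega]
      exact hσmem _ _
  -- the majorant functions
  set A : X → ℝ := fun x => (F 0).sup' (hneF 0) fun u => |Y u x| with hAdef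
  set R : X → ℝ := fun x =>
    Finset.univ.sup' Finset.univ_nonempty fun t => |Y t x - Y (σ K t) x| with hRdef
  set B : ℕ → X → ℝ := fun j x =>
    (F (K - j)).sup' (hneF (K - j)) fun u => |Y u x - Y (σ (K - 1 - j) u) x| with hBdef
  have hptw : ∀ t x, |Y t x| ≤ A x + R x + ∑ j ∈ Finset.range K, B j x := by
    intro t x
    have htel : ∑ j ∈ Finset.range K, (Y (c t j) x - Y (c t (j+1)) x)
        = Y (c t 0) x - Y (c t K) x := Finset.sum_range_sub' (fun j => Y (c t j) x) K
    have hYt : Y t x = Y (c t K) x + (Y t x - Y (c t 0) x)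
        + ∑ j ∈ Finset.range K, (Y (c t j) x - Y (c t (j+1)) x) := by
      rw [htel]; ring
    have h1 : |Y (c t K) x| ≤ A x := by
      have hm : c t K ∈ F 0 := by
        have h := hcmem t K; rwa [Nat.sub_self] at h
      exact Finset.le_sup' (fun u => |Y u x|) hm
    have h2 : |Y t x - Y (c t 0) x| ≤ R x := by
      rw [hc0]
      exact Finset.le_sup' (fun s => |Y s x - Y (σ K s) x|) (Finset.mem_univ t)
    have h3 : ∀ j ∈ Finset.range K, |Y (c t j) x - Y (c t (j+1)) x| ≤ B j x := by
      intro j _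
      rw [hcs]
      exact Finset.le_sup' (fun u => |Y u x - Y (σ (K - 1 - j) u) x|) (hcmem t j)
    calc |Y t x| = |Y (c t K) x + (Y t x - Y (c t 0) x)
        + ∑ j ∈ Finset.range K, (Y (c t j) x - Y (c t (j+1)) x)| := by rw [← hYt]
      _ ≤ |Y (c t K) x| + |Y t x - Y (c t 0) x|
          + ∑ j ∈ Finset.range K, |Y (c t j) x - Y (c t (j+1)) x| := by
          exact (abs_add_le _ _).trans
            (add_le_add (abs_add_le _ _) (Finset.abs_sum_le_sum_abs _ _))
      _ ≤ A x + R x + ∑ j ∈ Finset.range K, B j x :=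
          add_le_add (add_le_add h1 h2) (Finset.sum_le_sum h3)
  have hsup : ∀ x, |⨆ t, Y t x| ≤ A x + R x + ∑ j ∈ Finset.range K, B j x := by
    intro x
    rw [abs_le]
    constructor
    · have h := hptw t₀ x
      have hle := le_ciSup (Set.Finite.bddAbove (Set.finite_range fun t => Y t x)) t₀
      have := neg_abs_le (Y t₀ x)
      linarith
    · exact ciSup_le fun t => (le_abs_self _).trans (hptw t x)
  -- measurability
  have hAmeas : Measurable A := by
    have h : A = (F 0).sup' (hneF 0) (fun u => fun x => |Y u x|) := by
      ext x; rw [Finset.sup'_apply]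
    rw [h]
    exact Finset.measurable_sup' _ fun u _ => (hY u).abs
  have hRmeas : Measurable R := by
    have h : R = Finset.univ.sup' Finset.univ_nonempty
        (fun t => fun x => |Y t x - Y (σ K t) x|) := by
      ext x; rw [Finset.sup'_apply]
    rw [h]
    exact Finset.measurable_sup' _ fun t _ => ((hY t).sub (hY (σ K t))).abs
  have hBmeas : ∀ j, Measurable (B j) := by
    intro j
    have h : B j = (F (K - j)).sup' (hneF (K - j))
        (fun u => fun x => |Y u x - Y (σ (K - 1 - j) u) x|) := by
      ext x; rw [Finset.sup'_apply]
    rw [h]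
    exact Finset.measurable_sup' _ fun u _ => ((hY u).sub (hY (σ (K - 1 - j) u))).abs
  -- now fix p
  refine iSup₂_le fun p hp => ?_
  obtain ⟨hap, hpb⟩ := hp
  have hp1 : 1 < p := lt_of_le_of_lt ha hap
  have hp0 : 0 < p := lt_trans one_pos hp1
  have hκp : κ < p := lt_trans hκa hap
  have hψp : 1 ≤ ψ p := hψ.one_le p ⟨hap, hpb⟩
  have hψp0 : 0 < ψ p := lt_of_lt_of_le one_pos hψp
  set q : ℝ≥0∞ := ENNReal.ofReal p with hqdef
  have hq1 : 1 ≤ q := by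
    rw [hqdef, ← ENNReal.ofReal_one]
    exact ENNReal.ofReal_le_ofReal hp1.le
  have hinvp0 : 0 ≤ 1 / p := by positivity
  have hinvp1 : 1 / p ≤ 1 := by
    rw [div_le_one hp0]; linarith
  -- bound for A
  have hA : eLpNorm A q μ ≤ ENNReal.ofReal (C₀ * ψ p) := by
    have h := maxLp μ (hneF 0) (fun u _ => hY u) hp0
      (M := ENNReal.ofReal (ψ p)) (fun u _ => by
        have := eLpNorm_le_of_glNorm μ ⟨hap, hpb⟩ hp0 hψp0 (hY1 u)
        rwa [one_mul] at this)
    refine h.trans ?_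
    rw [ENNReal.ofReal_mul (by linarith)]
    gcongr
    have hcard : ((F 0).card : ℝ) ≤ C₀ := by
      have h0 := hFcard' 0
      simpa using h0
    refine (cardpow (by linarith) hcard hinvp0).trans ?_
    apply ENNReal.ofReal_le_ofReal
    calc C₀ ^ (1/p) ≤ C₀ ^ (1:ℝ) := Real.rpow_le_rpow_of_exponent_le hC₀ hinvp1
      _ = C₀ := Real.rpow_one C₀
  -- bound for R
  have hR : eLpNorm R q μ ≤ ENNReal.ofReal (ψ p) := by
    have h := maxLp μ (Finset.univ_nonempty (α := T)) (fun t _ => (hY t).sub (hY (σ K t))) hp0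
      (M := ENNReal.ofReal ((2:ℝ) ^ (-(K:ℝ)) * ψ p)) (fun t _ => by
        have hd := eLpNorm_le_of_glNorm μ ⟨hap, hpb⟩ hp0 hψp0 (hσd K t)
        rwa [← ENNReal.ofReal_mul (hεpos K).le] at hd)
    refine h.trans ?_
    have hcardK : ((Finset.univ : Finset T).card : ℝ) ≤ (K:ℝ) := by
      rw [Finset.card_univ]
    have h1 : ((Finset.univ : Finset T).card : ℝ≥0∞) ^ (1/p) ≤ ENNReal.ofReal (K:ℝ) := by
      refine (cardpow (by positivity) hcardK hinvp0).trans ?_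
      apply ENNReal.ofReal_le_ofReal
      calc (K:ℝ) ^ (1/p) ≤ (K:ℝ) ^ (1:ℝ) := by
            apply Real.rpow_le_rpow_of_exponent_le _ hinvp1
            exact_mod_cast hK1
        _ = (K:ℝ) := Real.rpow_one _
    calc ((Finset.univ : Finset T).card : ℝ≥0∞) ^ (1/p)
          * ENNReal.ofReal ((2:ℝ) ^ (-(K:ℝ)) * ψ p)
        ≤ ENNReal.ofReal (K:ℝ) * ENNReal.ofReal ((2:ℝ) ^ (-(K:ℝ)) * ψ p) := by gcongr
      _ = ENNReal.ofReal ((K:ℝ) * ((2:ℝ) ^ (-(K:ℝ)) * ψ p)) := by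
          rw [← ENNReal.ofReal_mul (by positivity)]
      _ ≤ ENNReal.ofReal (ψ p) := by
          apply ENNReal.ofReal_le_ofReal
          calc (K:ℝ) * ((2:ℝ) ^ (-(K:ℝ)) * ψ p) = ((K:ℝ) * (2:ℝ) ^ (-(K:ℝ))) * ψ p := by ring
            _ ≤ 1 * ψ p := by
                apply mul_le_mul_of_nonneg_right hKT (by linarith)
            _ = ψ p := one_mul _
  -- bound for the chain pieces
  set r : ℝ := (2:ℝ) ^ (κ/p - 1) with hrdef
  have hr0 : 0 ≤ r := (Real.rpow_pos_of_pos two_pos _).le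
  have hr1 : r < 1 := by
    apply Real.rpow_lt_one_of_one_lt_of_neg one_lt_two
    have : κ / p < 1 := (div_lt_one hp0).mpr hκp
    linarith
  have hB : ∀ j ∈ Finset.range K, eLpNorm (B j) q μ
      ≤ ENNReal.ofReal (2 * C₀ * ψ p * r ^ (K - j)) := by
    intro j hj
    have hjK : j < K := Finset.mem_range.mp hj
    set m : ℕ := K - j with hmdef
    have hm1 : 1 ≤ m := by omega
    have hidx : K - 1 - j = m - 1 := by omega
    have h := maxLp μ (hneF m) (fun u _ => (hY u).sub (hY (σ (K - 1 - j) u))) hp0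
      (M := ENNReal.ofReal ((2:ℝ) ^ (-((K - 1 - j : ℕ):ℝ)) * ψ p)) (fun u _ => by
        have hd := eLpNorm_le_of_glNorm μ ⟨hap, hpb⟩ hp0 hψp0 (hσd (K - 1 - j) u)
        rwa [← ENNReal.ofReal_mul (hεpos _).le] at hd)
    refine h.trans ?_
    have hcardm : (((F m).card : ℝ≥0∞)) ^ (1/p)
        ≤ ENNReal.ofReal ((C₀ * (2:ℝ) ^ ((m:ℝ) * κ)) ^ (1/p)) :=
      cardpow (by positivity) (hFcard' m) hinvp0
    calc ((F m).card : ℝ≥0∞) ^ (1/p) * ENNReal.ofReal ((2:ℝ) ^ (-((K - 1 - j : ℕ):ℝ)) * ψ p)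
        ≤ ENNReal.ofReal ((C₀ * (2:ℝ) ^ ((m:ℝ) * κ)) ^ (1/p))
          * ENNReal.ofReal ((2:ℝ) ^ (-((K - 1 - j : ℕ):ℝ)) * ψ p) := by gcongr
      _ = ENNReal.ofReal ((C₀ * (2:ℝ) ^ ((m:ℝ) * κ)) ^ (1/p)
            * ((2:ℝ) ^ (-((K - 1 - j : ℕ):ℝ)) * ψ p)) := by
          rw [← ENNReal.ofReal_mul (by positivity)]
      _ ≤ ENNReal.ofReal (2 * C₀ * ψ p * r ^ (K - j)) := by
          apply ENNReal.ofReal_le_ofReal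
          have hm1r : ((m - 1 : ℕ):ℝ) = (m:ℝ) - 1 := by
            push_cast [hm1]; ring
          rw [hidx, hm1r]
          have hsplit : (C₀ * (2:ℝ) ^ ((m:ℝ) * κ)) ^ (1/p)
              = C₀ ^ (1/p) * ((2:ℝ) ^ ((m:ℝ) * κ)) ^ (1/p) :=
            Real.mul_rpow (by linarith) (by positivity)
          have hC₀p : C₀ ^ (1/p) ≤ C₀ := by
            calc C₀ ^ (1/p) ≤ C₀ ^ (1:ℝ) := Real.rpow_le_rpow_of_exponent_le hC₀ hinvp1
              _ = C₀ := Real.rpow_one C₀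
          have h2p : ((2:ℝ) ^ ((m:ℝ) * κ)) ^ (1/p) = (2:ℝ) ^ ((m:ℝ) * κ / p) := by
            rw [← Real.rpow_mul (by norm_num : (0:ℝ) ≤ 2)]
            ring_nf
          have hrm : r ^ (K - j) = (2:ℝ) ^ ((m:ℝ) * (κ/p - 1)) := by
            rw [← hmdef, hrdef, ← Real.rpow_natCast ((2:ℝ) ^ (κ/p - 1)) m,
              ← Real.rpow_mul (by norm_num : (0:ℝ) ≤ 2)]
            ring_nf
          have hcomb : (2:ℝ) ^ ((m:ℝ) * κ / p) * (2:ℝ) ^ (-((m:ℝ) - 1))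
              = 2 * (2:ℝ) ^ ((m:ℝ) * (κ/p - 1)) := by
            rw [← Real.rpow_add two_pos]
            have : (2:ℝ) * (2:ℝ) ^ ((m:ℝ) * (κ/p - 1))
                = (2:ℝ) ^ (1 + (m:ℝ) * (κ/p - 1)) := by
              rw [Real.rpow_add two_pos, Real.rpow_one]
            rw [this]
            congr 1
            field_simp
            ring
          calc (C₀ * (2:ℝ) ^ ((m:ℝ) * κ)) ^ (1/p) * ((2:ℝ) ^ (-((m:ℝ) - 1)) * ψ p)
              = C₀ ^ (1/p) * ((2:ℝ) ^ ((m:ℝ) * κ / p) * (2:ℝ) ^ (-((m:ℝ) - 1))) * ψ p := by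
                rw [hsplit, h2p]; ring
            _ ≤ C₀ * ((2:ℝ) ^ ((m:ℝ) * κ / p) * (2:ℝ) ^ (-((m:ℝ) - 1))) * ψ p := by
                apply mul_le_mul_of_nonneg_right _ (by linarith)
                apply mul_le_mul_of_nonneg_right hC₀p (by positivity)
            _ = 2 * C₀ * ψ p * r ^ (K - j) := by
                rw [hcomb, hrm]; ring
  -- sum of the chain pieces
  have hsumB : ∑ j ∈ Finset.range K, eLpNorm (B j) q μ
      ≤ ENNReal.ofReal (2 * C₀ * ψ p * (3 / (1 - κ/p))) := by
    have hx0 : 0 < 1 - κ/p := by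
      have : κ / p < 1 := (div_lt_one hp0).mpr hκp
      linarith
    have hx1 : 1 - κ/p ≤ 1 := by
      have : 0 ≤ κ / p := by positivity
      linarith
    have hgeom : ∑ j ∈ Finset.range K, r ^ (K - j) ≤ 3 / (1 - κ/p) := by
      have hrefl : ∑ j ∈ Finset.range K, r ^ (K - j)
          = ∑ j ∈ Finset.range K, r ^ (j + 1) := by
        rw [← Finset.sum_range_reflect (fun i => r ^ (i + 1)) K]
        refine Finset.sum_congr rfl fun j hj => ?_
        have hjK : j < K := Finset.mem_range.mp hj
        congr 1
        omega
      have hle1 : ∑ j ∈ Finset.range K, r ^ (j + 1) ≤ ∑ j ∈ Finset.range K, r ^ j :=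
        Finset.sum_le_sum fun j _ => pow_le_pow_of_le_one hr0 hr1.le (Nat.le_succ j)
      have hrx : r = (2:ℝ) ^ (-(1 - κ/p)) := by
        rw [hrdef]; congr 1; ring
      have := geom_bound hx0 hx1 K
      rw [← hrx] at this
      calc ∑ j ∈ Finset.range K, r ^ (K - j) = ∑ j ∈ Finset.range K, r ^ (j+1) := hrefl
        _ ≤ ∑ j ∈ Finset.range K, r ^ j := hle1
        _ ≤ 3 / (1 - κ/p) := this
    calc ∑ j ∈ Finset.range K, eLpNorm (B j) q μ
        ≤ ∑ j ∈ Finset.range K, ENNReal.ofReal (2 * C₀ * ψ p * r ^ (K - j)) :=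
          Finset.sum_le_sum hB
      _ = ENNReal.ofReal (∑ j ∈ Finset.range K, 2 * C₀ * ψ p * r ^ (K - j)) := by
          rw [ENNReal.ofReal_sum_of_nonneg fun j _ => by positivity]
      _ ≤ ENNReal.ofReal (2 * C₀ * ψ p * (3 / (1 - κ/p))) := by
          apply ENNReal.ofReal_le_ofReal
          rw [← Finset.mul_sum]
          apply mul_le_mul_of_nonneg_left hgeom (by positivity)
  -- assemble
  have hmain : eLpNorm (fun x => ⨆ t, Y t x) q μ
      ≤ ENNReal.ofReal (8 * C₀ * (ψ p * (p / (p - κ)))) := by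
    have hmono : eLpNorm (fun x => ⨆ t, Y t x) q μ
        ≤ eLpNorm (A + (R + ∑ j ∈ Finset.range K, B j)) q μ := by
      apply eLpNorm_mono
      intro x
      rw [Real.norm_eq_abs, Real.norm_eq_abs]
      have hxe : (A + (R + ∑ j ∈ Finset.range K, B j)) x
          = A x + R x + ∑ j ∈ Finset.range K, B j x := by
        simp only [Pi.add_apply, Finset.sum_apply]
        ring
      rw [hxe]
      exact (hsup x).trans (le_abs_self _)
    have hsummeas : AEStronglyMeasurable (∑ j ∈ Finset.range K, B j) μ := by
      exact Finset.aestronglyMeasurable_sum _ fun j _ => (hBmeas j).aestronglyMeasurable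
    have htri : eLpNorm (A + (R + ∑ j ∈ Finset.range K, B j)) q μ
        ≤ eLpNorm A q μ + (eLpNorm R q μ + ∑ j ∈ Finset.range K, eLpNorm (B j) q μ) := by
      refine (eLpNorm_add_le hAmeas.aestronglyMeasurable
        (hRmeas.aestronglyMeasurable.add hsummeas) hq1).trans ?_
      gcongr
      refine (eLpNorm_add_le hRmeas.aestronglyMeasurable hsummeas hq1).trans ?_
      gcongr
      exact eLpNorm_sum_le (fun j _ => (hBmeas j).aestronglyMeasurable) hq1
    have hfinal : ENNReal.ofReal (C₀ * ψ p) + (ENNReal.ofReal (ψ p)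
        + ENNReal.ofReal (2 * C₀ * ψ p * (3 / (1 - κ/p))))
        ≤ ENNReal.ofReal (8 * C₀ * (ψ p * (p / (p - κ)))) := by
      have hx0 : 0 < 1 - κ/p := by
        have : κ / p < 1 := (div_lt_one hp0).mpr hκp
        linarith
      have hn1 : 0 ≤ C₀ * ψ p := mul_nonneg (by linarith) (by linarith)
      have hn2 : (0:ℝ) ≤ ψ p := by linarith
      have hn3 : 0 ≤ 2 * C₀ * ψ p * (3 / (1 - κ/p)) := by
        apply mul_nonneg (by nlinarith)
        exact div_nonneg (by norm_num) hx0.le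
      rw [← ENNReal.ofReal_add hn2 hn3, ← ENNReal.ofReal_add hn1 (by linarith)]
      apply ENNReal.ofReal_le_ofReal
      have hpκ : 0 < p - κ := by linarith
      have hyd : 3 / (1 - κ/p) = 3 * (p / (p - κ)) := by
        field_simp
      have hy1 : 1 ≤ p / (p - κ) := by
        rw [le_div_iff₀ hpκ]; linarith
      rw [hyd]
      set y := p / (p - κ)
      have hψ0 : 0 ≤ ψ p := by linarith
      nlinarith [mul_le_mul_of_nonneg_left hy1 (mul_nonneg (by linarith : (0:ℝ) ≤ C₀) hψ0),
        mul_le_mul_of_nonneg_left hy1 hψ0]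
    calc eLpNorm (fun x => ⨆ t, Y t x) q μ
        ≤ eLpNorm (A + (R + ∑ j ∈ Finset.range K, B j)) q μ := hmono
      _ ≤ eLpNorm A q μ + (eLpNorm R q μ + ∑ j ∈ Finset.range K, eLpNorm (B j) q μ) := htri
      _ ≤ ENNReal.ofReal (C₀ * ψ p) + (ENNReal.ofReal (ψ p)
          + ENNReal.ofReal (2 * C₀ * ψ p * (3 / (1 - κ/p)))) :=
          add_le_add hA (add_le_add hR hsumB)
      _ ≤ ENNReal.ofReal (8 * C₀ * (ψ p * (p / (p - κ)))) := hfinal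
  rw [lpNorm_eq_eLpNorm μ _ hp0]
  apply ENNReal.div_le_of_le_mul
  calc eLpNorm (fun x => ⨆ t, Y t x) (ENNReal.ofReal p) μ
      ≤ ENNReal.ofReal (8 * C₀ * (ψ p * (p / (p - κ)))) := hmain
    _ = ENNReal.ofReal (8 * C₀) * ENNReal.ofReal (ψ p * (p / (p - κ))) := by
        rw [← ENNReal.ofReal_mul (by linarith)]
end
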